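/- arXiv:2206.12457 — 8 statements merged into one kernel-verified Lean document; each statement's English description precedes it below -/
import Mathlib

section
/- Let $p>1$ and let $(c_k)_{k\ge 1}$ be a sequence of nonnegative reals. Then $\sum_{n=1}^\infty \left(\frac{1}{n}\sum_{k=1}^n c_k\right)^p \le \left(\frac{p}{p-1}\right)^p \sum_{k=1}^\infty c_k^p$. -/
open ENNReal

/-- Finite (real-valued) version of Hardy's inequality. -/
lemma hardy_finite (p : ℝ) (hp : 1 < p) (c : ℕ → ℝ) (hpos : ∀ k, 0 ≤ c k) (N : ℕ) :
    ∑ n ∈ Finset.range N, ((1 / ((n : ℝ) + 1)) * ∑ k ∈ Finset.range (n + 1), c k) ^ p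
      ≤ (p / (p - 1)) ^ p * ∑ k ∈ Finset.range N, c k ^ p := by
  have hp0 : (0:ℝ) < p := by linarith
  have hp1 : (0:ℝ) < p - 1 := by linarith
  set q : ℝ := p / (p - 1) with hq
  have hq0 : 0 < q := div_pos hp0 hp1
  have hpq : p.HolderConjugate q :=
    (Real.holderConjugate_iff_eq_conjExponent hp).mpr rfl
  set A : ℕ → ℝ := fun n => (1 / ((n : ℝ) + 1)) * ∑ k ∈ Finset.range (n + 1), c k with hA
  have hAnn : ∀ n, 0 ≤ A n := fun n =>
    mul_nonneg (by positivity) (Finset.sum_nonneg fun k _ => hpos k)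
  -- a * a^(p-1) = a^p for a ≥ 0
  have hmulp : ∀ a : ℝ, 0 ≤ a → a * a ^ (p - 1) = a ^ p := by
    intro a ha
    rw [show p = 1 + (p - 1) by ring, Real.rpow_add_of_nonneg ha zero_le_one hp1.le,
      Real.rpow_one]
    ring_nf
  -- (a^(p-1))^q = a^p for a ≥ 0
  have hpq' : (p - 1) * q = p := hpq.sub_one_mul_conj
  have hpowq : ∀ a : ℝ, 0 ≤ a → (a ^ (p - 1)) ^ q = a ^ p := by
    intro a ha
    rw [← Real.rpow_mul ha, hpq']
  -- the telescoping auxiliary sequence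
  set G : ℕ → ℝ := fun n => Nat.rec 0 (fun m _ => ((m : ℝ) + 1) * A m ^ p) n with hG
  have hG0 : G 0 = 0 := rfl
  have hGs : ∀ m : ℕ, G (m + 1) = ((m : ℝ) + 1) * A m ^ p := fun m => rfl
  -- key pointwise inequality
  have key : ∀ n : ℕ, A n ^ p ≤ q * (c n * A n ^ (p - 1)) + (1 / (p - 1)) * (G n - G (n + 1)) := by
    intro n
    cases n with
    | zero =>
        have hc0 : c 0 = A 0 := by simp [hA]
        rw [hc0, hG0, hGs, hmulp _ (hAnn 0)]
        have heq : q * A 0 ^ p + (1 / (p - 1)) * (0 - ((0:ℝ) + 1) * A 0 ^ p)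
            = A 0 ^ p := by
          rw [hq]; field_simp; ring
        push_cast
        linarith [heq]
    | succ m =>
        have hc : c (m + 1) = ((m : ℝ) + 2) * A (m + 1) - ((m : ℝ) + 1) * A m := by
          simp only [hA]
          rw [Finset.sum_range_succ (f := c) (n := m + 1)]
          push_cast
          field_simp
          ring
        set a := A (m + 1) with ha'
        set b := A m with hb'
        have ha : 0 ≤ a := hAnn _
        have hb : 0 ≤ b := hAnn _
        have young : b * a ^ (p - 1) ≤ b ^ p / p + a ^ p / q := by
          have := Real.young_inequality_of_nonneg hb (Real.rpow_nonneg ha (p-1)) hpq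
          rwa [hpowq a ha] at this
        rw [hGs, hGs, hc]
        have haX : a * a ^ (p - 1) = a ^ p := hmulp a ha
        have hy' : q * ((m:ℝ)+1) * (b * a ^ (p-1))
            ≤ q * ((m:ℝ)+1) * (b ^ p / p + a ^ p / q) :=
          mul_le_mul_of_nonneg_left young (by positivity)
        have hexp : q * (((((m:ℕ):ℝ)+2) * a - (((m:ℕ):ℝ)+1) * b) * a ^ (p-1))
            = q * ((m:ℝ)+2) * a ^ p - q * ((m:ℝ)+1) * (b * a ^ (p-1)) := by
          rw [← haX]; ring
        have hE : q * ((m:ℝ)+2) * a ^ p - q * ((m:ℝ)+1) * (b ^ p / p + a ^ p / q)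
            + (1/(p-1)) * (((m:ℝ)+1) * b ^ p - ((m:ℝ)+2) * a ^ p) = a ^ p := by
          rw [hq]; field_simp; ring
        push_cast
        linarith [hy', hE, hexp]
  -- sum it up
  set S : ℝ := ∑ n ∈ Finset.range N, A n ^ p with hS
  set T : ℝ := ∑ n ∈ Finset.range N, c n * A n ^ (p - 1) with hT
  have hSnn : 0 ≤ S := Finset.sum_nonneg fun n _ => Real.rpow_nonneg (hAnn n) p
  have hTnn : 0 ≤ T := Finset.sum_nonneg fun n _ =>
    mul_nonneg (hpos n) (Real.rpow_nonneg (hAnn n) (p-1))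
  have hGN : 0 ≤ G N := by
    cases N with
    | zero => simp [hG0]
    | succ m =>
        rw [hGs]
        exact mul_nonneg (by positivity) (Real.rpow_nonneg (hAnn m) p)
  have step1 : S ≤ q * T := by
    have hsum : S ≤ ∑ n ∈ Finset.range N,
        (q * (c n * A n ^ (p - 1)) + (1 / (p - 1)) * (G n - G (n + 1))) :=
      Finset.sum_le_sum fun n _ => key n
    rw [Finset.sum_add_distrib, ← Finset.mul_sum, ← Finset.mul_sum,
      Finset.sum_range_sub' G, hG0] at hsum
    have : (1 / (p - 1)) * (0 - G N) ≤ 0 := by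
      have : 0 - G N ≤ 0 := by linarith
      exact mul_nonpos_of_nonneg_of_nonpos (by positivity) this
    linarith
  -- Hölder
  set C : ℝ := ∑ k ∈ Finset.range N, c k ^ p with hC
  have hCnn : 0 ≤ C := Finset.sum_nonneg fun k _ => Real.rpow_nonneg (hpos k) p
  have holder : T ≤ C ^ (1/p) * S ^ (1/q) := by
    have := Real.inner_le_Lp_mul_Lq (Finset.range N) c (fun n => A n ^ (p - 1)) hpq
    have habs : ∀ k ∈ Finset.range N, |c k| ^ p = c k ^ p := fun k _ => by
      rw [abs_of_nonneg (hpos k)]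
    have habs2 : ∀ n ∈ Finset.range N, |A n ^ (p-1)| ^ q = A n ^ p := fun n _ => by
      rw [abs_of_nonneg (Real.rpow_nonneg (hAnn n) (p-1)), hpowq _ (hAnn n)]
    rw [Finset.sum_congr rfl habs, Finset.sum_congr rfl habs2] at this
    exact this
  -- conclude
  rcases eq_or_lt_of_le hSnn with hS0 | hS0
  · rw [← hS0]; positivity
  · have hstep : S ≤ q * (C ^ (1/p) * S ^ (1/q)) :=
      le_trans step1 (mul_le_mul_of_nonneg_left holder hq0.le)
    have hSsplit : S = S ^ (1/p) * S ^ (1/q) := by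
      rw [← Real.rpow_add hS0,
        show 1/p + 1/q = 1 by rw [one_div, one_div]; exact hpq.inv_add_inv_eq_one,
        Real.rpow_one]
    have hSq : 0 < S ^ (1/q) := Real.rpow_pos_of_pos hS0 _
    have h2 : S ^ (1/p) ≤ q * C ^ (1/p) := by
      rw [← mul_le_mul_iff_left₀ hSq]
      calc S ^ (1/p) * S ^ (1/q) = S := hSsplit.symm
        _ ≤ q * (C ^ (1/p) * S ^ (1/q)) := hstep
        _ = q * C ^ (1/p) * S ^ (1/q) := by ring
    have h3 : (S ^ (1/p)) ^ p ≤ (q * C ^ (1/p)) ^ p :=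
      Real.rpow_le_rpow (Real.rpow_nonneg hSnn _) h2 hp0.le
    rw [← Real.rpow_mul hSnn, one_div, inv_mul_cancel₀ hp0.ne', Real.rpow_one,
      Real.mul_rpow hq0.le (Real.rpow_nonneg hCnn _), ← Real.rpow_mul hCnn,
      inv_mul_cancel₀ hp0.ne', Real.rpow_one] at h3
    exact h3

/-- Classic sequence version of Hardy's inequality for `p > 1`.
Here `c n` represents `c_{n+1}`. -/
theorem hardy_sequence (p : ℝ) (hp : 1 < p) (c : ℕ → ℝ) (hpos : ∀ k, 0 ≤ c k) :
    ∑' n : ℕ, (ENNReal.ofReal ((1 / ((n : ℝ) + 1)) * ∑ k ∈ Finset.range (n + 1), c k)) ^ p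
      ≤ ENNReal.ofReal (p / (p - 1)) ^ p * ∑' k : ℕ, ENNReal.ofReal (c k) ^ p := by
  have hp0 : (0:ℝ) ≤ p := by linarith
  have hq0 : (0:ℝ) ≤ p / (p - 1) := by
    apply div_nonneg hp0; linarith
  have hAnn : ∀ n : ℕ, 0 ≤ (1 / ((n : ℝ) + 1)) * ∑ k ∈ Finset.range (n + 1), c k := fun n =>
    mul_nonneg (by positivity) (Finset.sum_nonneg fun k _ => hpos k)
  rw [ENNReal.tsum_eq_iSup_nat]
  refine iSup_le fun N => ?_
  calc ∑ n ∈ Finset.range N,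
        (ENNReal.ofReal ((1 / ((n : ℝ) + 1)) * ∑ k ∈ Finset.range (n + 1), c k)) ^ p
      = ENNReal.ofReal (∑ n ∈ Finset.range N,
          ((1 / ((n : ℝ) + 1)) * ∑ k ∈ Finset.range (n + 1), c k) ^ p) := by
        rw [ENNReal.ofReal_sum_of_nonneg fun n _ => Real.rpow_nonneg (hAnn n) p]
        exact Finset.sum_congr rfl fun n _ =>
          ENNReal.ofReal_rpow_of_nonneg (hAnn n) hp0
    _ ≤ ENNReal.ofReal ((p / (p - 1)) ^ p * ∑ k ∈ Finset.range N, c k ^ p) :=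
        ENNReal.ofReal_le_ofReal (hardy_finite p hp c hpos N)
    _ = ENNReal.ofReal (p / (p - 1)) ^ p *
          ∑ k ∈ Finset.range N, ENNReal.ofReal (c k) ^ p := by
        rw [ENNReal.ofReal_mul (by positivity), ENNReal.ofReal_rpow_of_nonneg hq0 hp0,
          ENNReal.ofReal_sum_of_nonneg fun k _ => Real.rpow_nonneg (hpos k) p]
        congr 1
        exact Finset.sum_congr rfl fun k _ =>
          (ENNReal.ofReal_rpow_of_nonneg (hpos k) hp0).symm
    _ ≤ ENNReal.ofReal (p / (p - 1)) ^ p * ∑' k : ℕ, ENNReal.ofReal (c k) ^ p :=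
        mul_le_mul_right (ENNReal.sum_le_tsum _) _
end

section
/- Let $p>1$ and let $\psi$ be a nonnegative measurable function on $(0,\infty)$ with $\int_0^\infty \psi^p < \infty$. Then $\int_0^\infty \left(\frac{1}{x}\int_0^x \psi\right)^p dx = \frac{p}{p-1}\int_0^\infty \left(\frac{1}{y}\int_0^y \psi\right)^{p-1}\psi(y)\,dy$. -/
open MeasureTheory Set ENNReal Filter

section Hardy

variable {p : ℝ} {ψ : ℝ → ℝ}

noncomputable def hPhi (ψ : ℝ → ℝ) (x : ℝ) : ℝ := ∫ y in Ioo (0:ℝ) x, ψ y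

lemma hPhi_nonneg (hpos : ∀ y, 0 ≤ ψ y) (x : ℝ) : 0 ≤ hPhi ψ x :=
  setIntegral_nonneg measurableSet_Ioo (fun y _ => hpos y)

lemma hIntOn (hp : 1 < p) (hmeas : Measurable ψ) (hpos : ∀ y, 0 ≤ ψ y)
    (hint : ∫⁻ y in Ioi (0:ℝ), ENNReal.ofReal (ψ y ^ p) < ⊤) (x : ℝ) :
    IntegrableOn ψ (Ioo 0 x) := by
  have hmp : Measurable fun y => ψ y ^ p := (Real.continuous_rpow_const (by linarith : (0:ℝ) ≤ p)).measurable.comp hmeas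
  have h1 : IntegrableOn (fun y => ψ y ^ p) (Ioi (0:ℝ)) := by
    refine ⟨hmp.aestronglyMeasurable, ?_⟩
    rw [hasFiniteIntegral_iff_ofReal (Eventually.of_forall fun y => Real.rpow_nonneg (hpos y) p)]
    exact hint
  have h2 : IntegrableOn (fun y => ψ y ^ p + 1) (Ioo 0 x) := by
    refine Integrable.add (h1.mono_set Ioo_subset_Ioi_self) (integrableOn_const ?_)
    exact measure_Ioo_lt_top.ne
  refine h2.mono' hmeas.aestronglyMeasurable (Eventually.of_forall fun y => ?_)
  rw [Real.norm_eq_abs, abs_of_nonneg (hpos y)]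
  rcases le_total (ψ y) 1 with h | h
  · nlinarith [Real.rpow_nonneg (hpos y) p]
  · have : ψ y ^ (1:ℝ) ≤ ψ y ^ p := Real.rpow_le_rpow_of_exponent_le h hp.le
    rw [Real.rpow_one] at this; linarith

lemma hPhi_mono (hp : 1 < p) (hmeas : Measurable ψ) (hpos : ∀ y, 0 ≤ ψ y)
    (hint : ∫⁻ y in Ioi (0:ℝ), ENNReal.ofReal (ψ y ^ p) < ⊤) :
    Monotone (hPhi ψ) := by
  intro a b hab
  exact setIntegral_mono_set (hIntOn hp hmeas hpos hint b)
    (Eventually.of_forall fun y => hpos y)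
    (HasSubset.Subset.eventuallyLE (Ioo_subset_Ioo_right hab))

lemma hPhi_contOn (hp : 1 < p) (hmeas : Measurable ψ) (hpos : ∀ y, 0 ≤ ψ y)
    (hint : ∫⁻ y in Ioi (0:ℝ), ENNReal.ofReal (ψ y ^ p) < ⊤) (x : ℝ) :
    ContinuousOn (hPhi ψ) (Icc 0 x) := by
  have : ∀ y, hPhi ψ y = ∫ t in Ioc (0:ℝ) y, ψ t := fun y =>
    (MeasureTheory.integral_Ioc_eq_integral_Ioo).symm
  rw [show hPhi ψ = fun y => ∫ t in Ioc (0:ℝ) y, ψ t from funext this]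
  refine intervalIntegral.continuousOn_primitive ?_
  rw [integrableOn_Icc_iff_integrableOn_Ioo]
  exact hIntOn hp hmeas hpos hint x


lemma hPhi_add (hp : 1 < p) (hmeas : Measurable ψ) (hpos : ∀ y, 0 ≤ ψ y)
    (hint : ∫⁻ y in Ioi (0:ℝ), ENNReal.ofReal (ψ y ^ p) < ⊤)
    {a x : ℝ} (h0a : 0 ≤ a) (hax : a ≤ x) :
    hPhi ψ x = hPhi ψ a + ∫ y in Ioo a x, ψ y := by
  have hIx := hIntOn hp hmeas hpos hint x
  have hIcx : IntegrableOn ψ (Ioc 0 x) := by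
    rcases le_or_gt x 0 with h | h
    · rw [Ioc_eq_empty (by exact not_lt.2 h)]; exact integrableOn_empty
    · rw [← integrableOn_Ioc_iff_integrableOn_Ioo] at hIx; exact hIx
  have h1 : hPhi ψ x = ∫ y in Ioc (0:ℝ) x, ψ y := integral_Ioc_eq_integral_Ioo.symm
  have h2 : hPhi ψ a = ∫ y in Ioc (0:ℝ) a, ψ y := integral_Ioc_eq_integral_Ioo.symm
  rw [h1, h2, ← integral_Ioc_eq_integral_Ioo (x := a),
    ← Ioc_union_Ioc_eq_Ioc h0a hax,
    setIntegral_union (Ioc_disjoint_Ioc_of_le le_rfl) measurableSet_Ioc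
      (hIcx.mono_set (Ioc_subset_Ioc_right hax))
      (hIcx.mono_set (Ioc_subset_Ioc_left h0a))]

lemma hMeasCalc (hp : 1 < p) (hmeas : Measurable ψ) (hpos : ∀ y, 0 ≤ ψ y)
    (hint : ∫⁻ y in Ioi (0:ℝ), ENNReal.ofReal (ψ y ^ p) < ⊤)
    {x : ℝ} (hx : 0 < x) {t : ℝ} (ht : 0 < t) :
    ((volume.restrict (Ioo (0:ℝ) x)).withDensity (fun y => ENNReal.ofReal (ψ y)))
        {a | t < hPhi ψ a} = ENNReal.ofReal (hPhi ψ x - t) := by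
  have hΦm := hPhi_mono hp hmeas hpos hint
  have hΦmeas : Measurable (hPhi ψ) := hΦm.measurable
  have hSm : MeasurableSet {a | t < hPhi ψ a} := measurableSet_lt measurable_const hΦmeas
  rw [withDensity_apply _ hSm, Measure.restrict_restrict hSm]
  rcases le_or_gt (hPhi ψ x) t with hc | hc
  · have he : {a | t < hPhi ψ a} ∩ Ioo 0 x = ∅ := by
      apply eq_empty_of_forall_notMem
      rintro y ⟨hyS, hy0, hyx⟩
      exact absurd (le_trans (hΦm hyx.le) hc) (not_le.2 hyS)
    rw [he, Measure.restrict_empty, lintegral_zero_measure]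
    exact (ofReal_of_nonpos (by linarith)).symm
  · set A : Set ℝ := Icc 0 x ∩ (hPhi ψ) ⁻¹' (Iic t) with hA
    have hΦ0 : hPhi ψ 0 = 0 := by simp [hPhi]
    have hA_ne : A.Nonempty := ⟨0, ⟨le_rfl, hx.le⟩, by simp [mem_preimage, hΦ0, ht.le]⟩
    have hA_bdd : BddAbove A := ⟨x, fun y hy => hy.1.2⟩
    have hA_closed : IsClosed A :=
      (hPhi_contOn hp hmeas hpos hint x).preimage_isClosed_of_isClosed isClosed_Icc isClosed_Iic
    set a := sSup A with ha
    have haA : a ∈ A := hA_closed.csSup_mem hA_ne hA_bdd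
    have h0a : 0 ≤ a := haA.1.1
    have hat' : hPhi ψ a ≤ t := haA.2
    have hax : a < x := lt_of_le_of_ne haA.1.2 (fun h => by rw [h] at hat'; linarith)
    have hgt : ∀ y ∈ Ioo a x, t < hPhi ψ y := by
      intro y hy
      by_contra h
      push_neg at h
      have hyA : y ∈ A := ⟨⟨le_trans h0a hy.1.le, hy.2.le⟩, h⟩
      exact absurd (le_csSup hA_bdd hyA) (not_le.2 hy.1)
    have hta : t ≤ hPhi ψ a := by
      have hcl : a ∈ closure (Ioo a x) := by
        rw [closure_Ioo hax.ne]; exact ⟨le_rfl, hax.le⟩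
      have hnb : (nhdsWithin a (Ioo a x)).NeBot := mem_closure_iff_nhdsWithin_neBot.1 hcl
      have htend : Tendsto (hPhi ψ) (nhdsWithin a (Ioo a x)) (nhds (hPhi ψ a)) := by
        have hcw : ContinuousWithinAt (hPhi ψ) (Icc 0 x) a :=
          (hPhi_contOn hp hmeas hpos hint x) a haA.1
        exact hcw.mono (fun y hy => ⟨le_trans h0a hy.1.le, hy.2.le⟩)
      exact ge_of_tendsto htend (eventually_nhdsWithin_of_forall (fun y hy => (hgt y hy).le))
    have hat : hPhi ψ a = t := le_antisymm hat' hta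
    have hset : {y | t < hPhi ψ y} ∩ Ioo 0 x = Ioo a x := by
      ext y
      constructor
      · rintro ⟨hyS, _, hyx⟩
        refine ⟨?_, hyx⟩
        by_contra h
        push_neg at h
        exact absurd (le_trans (hΦm h) hat.le) (not_le.2 hyS)
      · intro hy
        exact ⟨hgt y hy, lt_of_le_of_lt h0a hy.1, hy.2⟩
    rw [hset]
    have hIax : IntegrableOn ψ (Ioo a x) :=
      (hIntOn hp hmeas hpos hint x).mono_set (Ioo_subset_Ioo_left h0a)
    rw [← ofReal_integral_eq_lintegral_ofReal hIax
      (Eventually.of_forall fun y => hpos y)]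
    congr 1
    have := hPhi_add hp hmeas hpos hint h0a hax.le
    rw [← hat]
    linarith


lemma hTInt (hp : 1 < p) {c : ℝ} (hc : 0 ≤ c) :
    ∫⁻ t in Ioi (0:ℝ), ENNReal.ofReal (c - t) * ENNReal.ofReal ((p-1) * t ^ (p-2))
      = ENNReal.ofReal (c ^ p / p) := by
  rcases hc.eq_or_lt with h0 | h0
  · have h1 : ∀ t ∈ Ioi (0:ℝ),
        ENNReal.ofReal (c - t) * ENNReal.ofReal ((p-1) * t ^ (p-2)) = 0 := by
      intro t ht
      rw [ofReal_of_nonpos (by rw [← h0] at *; linarith [mem_Ioi.1 ht]), zero_mul]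
    rw [setLIntegral_congr_fun measurableSet_Ioi h1, lintegral_zero,
      ← h0, Real.zero_rpow (by linarith : p ≠ 0), zero_div, ofReal_zero]
  · set F : ℝ → ℝ := fun t => (c - t) * ((p-1) * t ^ (p-2)) with hF
    have h1 : ∀ t ∈ Ioi (0:ℝ),
        ENNReal.ofReal (c - t) * ENNReal.ofReal ((p-1) * t ^ (p-2))
          = (Ioo 0 c).indicator (fun s => ENNReal.ofReal (F s)) t := by
      intro t ht
      by_cases h : t < c
      · rw [indicator_of_mem (mem_Ioo.2 ⟨mem_Ioi.1 ht, h⟩), hF, ← ofReal_mul (by linarith)]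
      · rw [indicator_of_notMem (fun hh => h hh.2), ofReal_of_nonpos (by linarith [not_lt.1 h]),
          zero_mul]
    rw [setLIntegral_congr_fun measurableSet_Ioi h1,
      lintegral_indicator measurableSet_Ioo, Measure.restrict_restrict measurableSet_Ioo,
      inter_eq_self_of_subset_left Ioo_subset_Ioi_self]
    have i1 : IntervalIntegrable (fun t : ℝ => t ^ (p-2)) volume 0 c :=
      intervalIntegral.intervalIntegrable_rpow' (by linarith)
    have i2 : IntervalIntegrable (fun t : ℝ => t ^ (p-1)) volume 0 c :=
      intervalIntegral.intervalIntegrable_rpow' (by linarith)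
    have iG : IntegrableOn (fun t : ℝ => (p-1)*c*t^(p-2) - (p-1)*t^(p-1)) (Ioo 0 c) := by
      have := (i1.const_mul ((p-1)*c)).sub (i2.const_mul (p-1))
      rw [intervalIntegrable_iff_integrableOn_Ioc_of_le h0.le] at this
      exact (this.mono_set Ioo_subset_Ioc_self).congr_fun
        (fun t ht => by ring) measurableSet_Ioo
    have hFG : ∀ t ∈ Ioo (0:ℝ) c, F t = (p-1)*c*t^(p-2) - (p-1)*t^(p-1) := by
      intro t ht
      have ht1 : t ^ (p-1) = t ^ (p-2) * t := by
        rw [show p-1 = p-2+1 by ring, Real.rpow_add_one ht.1.ne']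
      rw [hF]; dsimp only; rw [ht1]; ring
    have iF : IntegrableOn F (Ioo 0 c) :=
      iG.congr_fun (fun t ht => (hFG t ht).symm) measurableSet_Ioo
    have hFnn : 0 ≤ᵐ[volume.restrict (Ioo (0:ℝ) c)] F :=
      (ae_restrict_iff' measurableSet_Ioo).2 (ae_of_all _ fun t ht =>
        mul_nonneg (by linarith [ht.2]) (mul_nonneg (by linarith)
          (Real.rpow_nonneg ht.1.le _)))
    rw [← ofReal_integral_eq_lintegral_ofReal iF hFnn]
    congr 1
    rw [setIntegral_congr_fun measurableSet_Ioo hFG,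
      ← integral_Ioc_eq_integral_Ioo, ← intervalIntegral.integral_of_le h0.le,
      intervalIntegral.integral_sub (i1.const_mul _) (i2.const_mul _),
      intervalIntegral.integral_const_mul, intervalIntegral.integral_const_mul,
      integral_rpow (Or.inl (by linarith)), integral_rpow (Or.inl (by linarith)),
      show p - 2 + 1 = p - 1 by ring, show p - 1 + 1 = p by ring,
      Real.zero_rpow (by intro h; linarith : p - 1 ≠ 0),
      Real.zero_rpow (by intro h; linarith : p ≠ 0)]
    have hcp : c * c ^ (p-1) = c ^ p := by
      rw [show p = (p-1)+1 by ring, Real.rpow_add h0, Real.rpow_one]; ring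
    have hp1 : p - 1 ≠ 0 := by intro h; linarith
    have hp0 : p ≠ 0 := by intro h; linarith
    rw [sub_zero, sub_zero]
    have key : (p-1) * c * (c ^ (p-1) / (p-1)) = c ^ p := by
      rw [eq_comm, ← hcp]; field_simp
    rw [key]
    field_simp
    ring

lemma hKey (hp : 1 < p) (hmeas : Measurable ψ) (hpos : ∀ y, 0 ≤ ψ y)
    (hint : ∫⁻ y in Ioi (0:ℝ), ENNReal.ofReal (ψ y ^ p) < ⊤) {x : ℝ} (hx : 0 < x) :
    ∫⁻ y in Ioo (0:ℝ) x, ENNReal.ofReal (hPhi ψ y ^ (p-1) * ψ y)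
      = ENNReal.ofReal (hPhi ψ x ^ p / p) := by
  have hΦm := hPhi_mono hp hmeas hpos hint
  have hΦmeas : Measurable (hPhi ψ) := hΦm.measurable
  have hg : Measurable fun y => ENNReal.ofReal (hPhi ψ y ^ (p-1)) :=
    ENNReal.measurable_ofReal.comp
      ((Real.continuous_rpow_const (by linarith : (0:ℝ) ≤ p-1)).measurable.comp hΦmeas)
  have hden : Measurable (fun y => ENNReal.ofReal (ψ y)) := ENNReal.measurable_ofReal.comp hmeas
  set μ := (volume.restrict (Ioo (0:ℝ) x)).withDensity (fun y => ENNReal.ofReal (ψ y)) with hμ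
  have step1 : ∫⁻ y in Ioo (0:ℝ) x, ENNReal.ofReal (hPhi ψ y ^ (p-1) * ψ y)
      = ∫⁻ y, ENNReal.ofReal (hPhi ψ y ^ (p-1)) ∂μ := by
    rw [hμ, lintegral_withDensity_eq_lintegral_mul _ hden hg]
    apply lintegral_congr
    intro y
    simp only [Pi.mul_apply]
    rw [ofReal_mul (Real.rpow_nonneg (hPhi_nonneg hpos y) _), mul_comm]
  have hFTC : ∀ ω : ℝ, (∫ t in (0:ℝ)..(hPhi ψ ω), (p-1) * t ^ (p-2)) = hPhi ψ ω ^ (p-1) := by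
    intro ω
    rw [intervalIntegral.integral_const_mul, integral_rpow (Or.inl (by linarith)),
      show p - 2 + 1 = p - 1 by ring, Real.zero_rpow (by intro h; linarith : p - 1 ≠ 0)]
    have hp1 : p - 1 ≠ 0 := by intro h; linarith
    rw [sub_zero, mul_div_cancel₀ _ hp1]
  have lc := lintegral_comp_eq_lintegral_meas_lt_mul μ
    (Eventually.of_forall (hPhi_nonneg hpos)) hΦmeas.aemeasurable
    (fun t ht => (intervalIntegral.intervalIntegrable_rpow' (by linarith : (-1:ℝ) < p-2)).const_mul (p-1))
    ((ae_restrict_iff' measurableSet_Ioi).2 (ae_of_all _ fun t ht =>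
      mul_nonneg (by linarith) (Real.rpow_nonneg (le_of_lt ht) _)))
  have step2 : ∫⁻ y, ENNReal.ofReal (hPhi ψ y ^ (p-1)) ∂μ
      = ∫⁻ t in Ioi (0:ℝ), μ {a | t < hPhi ψ a} * ENNReal.ofReal ((p-1) * t ^ (p-2)) := by
    rw [← lc]
    exact lintegral_congr fun ω => by rw [hFTC ω]
  have step3 : ∫⁻ t in Ioi (0:ℝ), μ {a | t < hPhi ψ a} * ENNReal.ofReal ((p-1) * t ^ (p-2))
      = ∫⁻ t in Ioi (0:ℝ), ENNReal.ofReal (hPhi ψ x - t) * ENNReal.ofReal ((p-1) * t ^ (p-2)) :=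
    setLIntegral_congr_fun measurableSet_Ioi (fun t ht => by
      rw [hMeasCalc hp hmeas hpos hint hx (mem_Ioi.1 ht)])
  rw [step1, step2, step3]
  exact hTInt hp (hPhi_nonneg hpos x)


lemma hPowMeas (hp : 1 < p) : Measurable (fun x : ℝ => ENNReal.ofReal ((1/x) ^ p)) := by
  apply ENNReal.measurable_ofReal.comp
  apply measurable_of_continuousOn_compl_singleton (0:ℝ)
  exact (continuousOn_const.div continuousOn_id (fun x hx => by simpa using hx)).rpow_const
    (fun x hx => Or.inr (by linarith))

/-- Key identity in the short proof of Hardy's inequality: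
`∫_0^∞ ((1/x)∫_0^x ψ)^p dx = p/(p-1) ∫_0^∞ ((1/y)∫_0^y ψ)^{p-1} ψ(y) dy`. -/
theorem hardy_identity (p : ℝ) (hp : 1 < p) (ψ : ℝ → ℝ)
    (hmeas : Measurable ψ) (hpos : ∀ y, 0 ≤ ψ y)
    (hint : ∫⁻ y in Ioi (0 : ℝ), ENNReal.ofReal (ψ y ^ p) < ⊤) :
    ∫⁻ x in Ioi (0 : ℝ),
        ENNReal.ofReal ((1 / x * ∫ y in Ioo (0 : ℝ) x, ψ y) ^ p)
      = ENNReal.ofReal (p / (p - 1)) *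
        ∫⁻ y in Ioi (0 : ℝ),
          ENNReal.ofReal ((1 / y * ∫ z in Ioo (0 : ℝ) y, ψ z) ^ (p - 1) * ψ y) := by
  have hΦnn := hPhi_nonneg hpos
  have hΦm := hPhi_mono hp hmeas hpos hint
  have hΦmeas : Measurable (hPhi ψ) := hΦm.measurable
  have hp0 : (0:ℝ) < p := by linarith
  have hp1 : (0:ℝ) < p - 1 := by linarith
  have hp1' : p - 1 ≠ 0 := ne_of_gt hp1
  set F : ℝ → ℝ≥0∞ := fun y => ENNReal.ofReal (hPhi ψ y ^ (p-1) * ψ y) with hFdef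
  have hFmeas : Measurable F := ENNReal.measurable_ofReal.comp
    (((Real.continuous_rpow_const hp1.le).measurable.comp hΦmeas).mul hmeas)
  set G : ℝ × ℝ → ℝ≥0∞ :=
    ({q : ℝ × ℝ | q.2 ∈ Ioo 0 q.1}).indicator
      (fun q => ENNReal.ofReal ((1/q.1) ^ p) * F q.2) with hGdef
  have hSetMeas : MeasurableSet {q : ℝ × ℝ | q.2 ∈ Ioo 0 q.1} := by
    have : {q : ℝ × ℝ | q.2 ∈ Ioo 0 q.1}
        = {q : ℝ × ℝ | 0 < q.2} ∩ {q : ℝ × ℝ | q.2 < q.1} := rfl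
    rw [this]
    exact (measurableSet_lt measurable_const measurable_snd).inter
      (measurableSet_lt measurable_snd measurable_fst)
  have hGmeas : Measurable G :=
    (((hPowMeas hp).comp measurable_fst).mul (hFmeas.comp measurable_snd)).indicator hSetMeas
  have stepA : ∀ x ∈ Ioi (0:ℝ),
      ENNReal.ofReal ((1 / x * ∫ y in Ioo (0 : ℝ) x, ψ y) ^ p)
        = ENNReal.ofReal p * (ENNReal.ofReal ((1/x) ^ p) * ∫⁻ y in Ioo (0:ℝ) x, F y) := by
    intro x hx
    have hx0 : (0:ℝ) < x := hx
    have h1 : (1 / x * hPhi ψ x) ^ p = (1/x) ^ p * (hPhi ψ x) ^ p :=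
      Real.mul_rpow (by positivity) (hΦnn x)
    rw [show (∫ y in Ioo (0:ℝ) x, ψ y) = hPhi ψ x from rfl, h1,
      ofReal_mul (Real.rpow_nonneg (by positivity) p), hFdef,
      hKey hp hmeas hpos hint hx0,
      show ENNReal.ofReal p * (ENNReal.ofReal ((1/x) ^ p)
          * ENNReal.ofReal (hPhi ψ x ^ p / p))
        = ENNReal.ofReal ((1/x) ^ p) * (ENNReal.ofReal p
          * ENNReal.ofReal (hPhi ψ x ^ p / p)) from by ring,
      ← ofReal_mul hp0.le,
      show p * (hPhi ψ x ^ p / p) = hPhi ψ x ^ p from by field_simp]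
  have stepB : ∀ x ∈ Ioi (0:ℝ),
      ENNReal.ofReal ((1/x) ^ p) * ∫⁻ y in Ioo (0:ℝ) x, F y
        = ∫⁻ y in Ioi (0:ℝ), G (x, y) := by
    intro x hx
    have h1 : ∫⁻ y in Ioo (0:ℝ) x, F y
        = ∫⁻ y in Ioi (0:ℝ), (Ioo (0:ℝ) x).indicator F y := by
      rw [lintegral_indicator measurableSet_Ioo, Measure.restrict_restrict measurableSet_Ioo,
        inter_eq_self_of_subset_left Ioo_subset_Ioi_self]
    rw [h1, ← lintegral_const_mul _ (hFmeas.indicator measurableSet_Ioo)]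
    apply lintegral_congr
    intro y
    by_cases hy : y ∈ Ioo (0:ℝ) x
    · rw [indicator_of_mem hy, hGdef,
        indicator_of_mem (show (x, y) ∈ {q : ℝ × ℝ | q.2 ∈ Ioo 0 q.1} from hy)]
    · rw [indicator_of_notMem hy, mul_zero, hGdef,
        indicator_of_notMem (show (x, y) ∉ {q : ℝ × ℝ | q.2 ∈ Ioo 0 q.1} from hy)]
  have stepC : ∀ y ∈ Ioi (0:ℝ),
      ∫⁻ x in Ioi (0:ℝ), G (x, y) = ENNReal.ofReal (y ^ (1-p) / (p-1)) * F y := by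
    intro y hy
    have hy0 : (0:ℝ) < y := hy
    have h1 : ∫⁻ x in Ioi (0:ℝ), G (x, y)
        = ∫⁻ x in Ioi (0:ℝ),
            (Ioi y).indicator (fun x => ENNReal.ofReal ((1/x) ^ p) * F y) x :=
      setLIntegral_congr_fun measurableSet_Ioi ((fun x hx => by
        by_cases h : y < x
        · rw [indicator_of_mem (mem_Ioi.2 h), hGdef,
            indicator_of_mem (show (x, y) ∈ {q : ℝ × ℝ | q.2 ∈ Ioo 0 q.1} from ⟨hy0, h⟩)]
        · rw [indicator_of_notMem (fun hh => h (mem_Ioi.1 hh)), hGdef,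
            indicator_of_notMem (show (x, y) ∉ {q : ℝ × ℝ | q.2 ∈ Ioo 0 q.1} from
              fun hh => h hh.2)]))
    rw [h1, lintegral_indicator measurableSet_Ioi, Measure.restrict_restrict measurableSet_Ioi,
      inter_eq_self_of_subset_left (Ioi_subset_Ioi hy0.le),
      lintegral_mul_const _ (hPowMeas hp)]
    congr 1
    have hcong : ∀ x ∈ Ioi y, ENNReal.ofReal ((1/x) ^ p) = ENNReal.ofReal (x ^ (-p)) := by
      intro x hx
      have hx0 : (0:ℝ) < x := lt_trans hy0 (mem_Ioi.1 hx)
      rw [one_div, Real.inv_rpow hx0.le, ← Real.rpow_neg hx0.le]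
    rw [setLIntegral_congr_fun measurableSet_Ioi hcong,
      ← ofReal_integral_eq_lintegral_ofReal (integrableOn_Ioi_rpow_of_lt (by linarith) hy0)
        ((ae_restrict_iff' measurableSet_Ioi).2 (ae_of_all _ (fun x hx =>
          Real.rpow_nonneg (le_of_lt (lt_trans hy0 (mem_Ioi.1 hx))) _))),
      integral_Ioi_rpow_of_lt (by linarith) hy0]
    congr 1
    rw [show (-p + 1 : ℝ) = 1 - p by ring]
    have h1p : (1 - p : ℝ) ≠ 0 := by intro h; linarith
    field_simp
    ring
  calc ∫⁻ x in Ioi (0:ℝ), ENNReal.ofReal ((1 / x * ∫ y in Ioo (0 : ℝ) x, ψ y) ^ p)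
      = ∫⁻ x in Ioi (0:ℝ), ENNReal.ofReal p * ∫⁻ y in Ioi (0:ℝ), G (x, y) :=
        setLIntegral_congr_fun measurableSet_Ioi ((fun x hx => by
          rw [stepA x hx, stepB x hx]))
    _ = ENNReal.ofReal p * ∫⁻ x in Ioi (0:ℝ), ∫⁻ y in Ioi (0:ℝ), G (x, y) :=
        lintegral_const_mul' _ _ ofReal_ne_top
    _ = ENNReal.ofReal p * ∫⁻ y in Ioi (0:ℝ), ∫⁻ x in Ioi (0:ℝ), G (x, y) := by
        rw [lintegral_lintegral_swap (f := fun x y => G (x, y)) (by exact hGmeas.aemeasurable)]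
    _ = ENNReal.ofReal p * ∫⁻ y in Ioi (0:ℝ), ENNReal.ofReal (y ^ (1-p) / (p-1)) * F y := by
        rw [setLIntegral_congr_fun measurableSet_Ioi stepC]
    _ = ∫⁻ y in Ioi (0:ℝ), ENNReal.ofReal p * (ENNReal.ofReal (y ^ (1-p) / (p-1)) * F y) :=
        (lintegral_const_mul' _ _ ofReal_ne_top).symm
    _ = ∫⁻ y in Ioi (0:ℝ), ENNReal.ofReal (p / (p-1)) *
          ENNReal.ofReal ((1 / y * ∫ z in Ioo (0 : ℝ) y, ψ z) ^ (p - 1) * ψ y) :=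
        setLIntegral_congr_fun measurableSet_Ioi ((fun y hy => by
          have hy0 : (0:ℝ) < y := hy
          have e1 : (1 / y * ∫ z in Ioo (0 : ℝ) y, ψ z) ^ (p - 1)
              = y ^ (1-p) * hPhi ψ y ^ (p-1) := by
            rw [show (∫ z in Ioo (0:ℝ) y, ψ z) = hPhi ψ y from rfl,
              Real.mul_rpow (by positivity) (hΦnn y), one_div, Real.inv_rpow hy0.le,
              ← Real.rpow_neg hy0.le, show (-(p-1) : ℝ) = 1 - p by ring]
          rw [e1, hFdef, ← ofReal_mul (div_nonneg (Real.rpow_nonneg hy0.le _) hp1.le),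
            ← ofReal_mul hp0.le, ← ofReal_mul (div_nonneg hp0.le hp1.le)]
          congr 1
          ring))
    _ = ENNReal.ofReal (p / (p-1)) *
          ∫⁻ y in Ioi (0:ℝ),
            ENNReal.ofReal ((1 / y * ∫ z in Ioo (0 : ℝ) y, ψ z) ^ (p - 1) * ψ y) :=
        lintegral_const_mul' _ _ ofReal_ne_top

end Hardy
end

section
/- Let $p>1$, let $\psi$ be a nonnegative $p$-integrable function, and suppose $E(|\psi(Y)|^p)^{1/p} = E(|\psi(Y)|)$, i.e. $\psi(Y)$ is a.s. constant and nonzero. Then the root $\alpha$ of $E(|\psi(Y)|)(p-1+\alpha) = p\{E(|\psi(Y)|^p)\}^{1/p}\alpha^{1/p}$ in $[0,1]$ equals $1$, and the probability theoretic Hardy inequality $\{E(|E(\psi(Y)\mathbf{1}_{[Y\le X]}\mid X)/F(X)|^p)\}^{1/p} \le \frac{p}{p-1+\alpha}\{E(|\psi(Y)|^p)\}^{1/p}$ holds with equality. -/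
open MeasureTheory Set ENNReal ProbabilityTheory

lemma root_eq_one {p α : ℝ} (hp : 1 < p) (hα : α ∈ Icc (0:ℝ) 1)
    (h : p - 1 + α = p * α ^ (1/p)) : α = 1 := by
  by_contra hne
  set t : ℝ := α ^ (1/p) with ht
  have hp0 : (0:ℝ) < p := lt_trans one_pos hp
  have htp : t ^ p = α := by
    rw [ht, ← Real.rpow_mul hα.1, one_div_mul_cancel hp0.ne', Real.rpow_one]
  have ht0 : 0 ≤ t := Real.rpow_nonneg hα.1 _
  have ht1 : t ≠ 1 := by
    intro h1; apply hne; rw [← htp, h1, Real.one_rpow]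
  have key : 1 + p * (t - 1) < (1 + (t - 1)) ^ p :=
    one_add_mul_self_lt_rpow_one_add (by linarith) (sub_ne_zero.mpr ht1) hp
  rw [show (1 : ℝ) + (t - 1) = t by ring, htp] at key
  nlinarith [key]

lemma ae_const_of_eq {Ω : Type*} [MeasurableSpace Ω] (P : Measure Ω) [IsProbabilityMeasure P]
    (g : Ω → ℝ) (hg : Measurable g) (h0 : ∀ ω, 0 ≤ g ω) {p : ℝ} (hp : 1 < p)
    (hmom : ∫⁻ ω, ENNReal.ofReal (g ω ^ p) ∂P < ⊤)
    (hconst : (∫ ω, g ω ^ p ∂P) ^ (1 / p) = ∫ ω, g ω ∂P) :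
    g =ᵐ[P] fun _ => ∫ ω, g ω ∂P := by
  have hp0 : (0:ℝ) < p := lt_trans one_pos hp
  have hgp_meas : Measurable (fun ω => g ω ^ p) := (Real.continuous_rpow_const (le_of_lt (lt_trans one_pos hp))).measurable.comp hg
  have hgp_int : Integrable (fun ω => g ω ^ p) P := by
    refine ⟨hgp_meas.aestronglyMeasurable, ?_⟩
    rw [hasFiniteIntegral_iff_ofReal (Filter.Eventually.of_forall fun ω =>
      Real.rpow_nonneg (h0 ω) p)]
    exact hmom
  have hg_int : Integrable g P := by
    refine Integrable.mono' (g := fun ω => 1 + g ω ^ p) ((integrable_const (1:ℝ)).add hgp_int)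
      hg.aestronglyMeasurable (Filter.Eventually.of_forall fun ω => ?_)
    rw [Real.norm_eq_abs, abs_of_nonneg (h0 ω)]
    show g ω ≤ 1 + g ω ^ p
    rcases le_or_gt (g ω) 1 with h | h
    · have : (0:ℝ) ≤ g ω ^ p := Real.rpow_nonneg (h0 ω) p
      linarith
    · have h2 : g ω ^ (1:ℝ) ≤ g ω ^ p := Real.rpow_le_rpow_of_exponent_le h.le hp.le
      rw [Real.rpow_one] at h2
      linarith
  have hjensen := (strictConvexOn_rpow hp).ae_eq_const_or_map_average_lt
    (Real.continuous_rpow_const hp0.le).continuousOn isClosed_Ici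
    (Filter.Eventually.of_forall fun ω => (h0 ω : g ω ∈ Ici (0:ℝ))) hg_int
    (by exact hgp_int)
  rcases hjensen with h | h
  · rw [average_eq_integral] at h; exact h
  · exfalso
    rw [average_eq_integral, average_eq_integral] at h
    have hnn : 0 ≤ ∫ ω, g ω ^ p ∂P :=
      integral_nonneg fun ω => Real.rpow_nonneg (h0 ω) p
    have : (∫ ω, g ω ∂P) ^ p = ∫ ω, g ω ^ p ∂P := by
      rw [← hconst, ← Real.rpow_mul hnn, one_div_mul_cancel hp0.ne', Real.rpow_one]
    rw [this] at h
    exact lt_irrefl _ h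

lemma condexp_indicator_le_eq {Ω : Type*} [MeasurableSpace Ω] (P : Measure Ω)
    [IsProbabilityMeasure P] (X Y : Ω → ℝ) (hX : Measurable X) (hY : Measurable Y)
    (hindep : IndepFun X Y P) (hid : Measure.map X P = Measure.map Y P) :
    (fun ω => (Measure.map X P (Iic (X ω))).toReal) =ᵐ[P]
      P[(fun ω => if Y ω ≤ X ω then (1:ℝ) else 0) | MeasurableSpace.comap X inferInstance] := by
  set μ : Measure ℝ := Measure.map X P with hμ
  haveI : IsProbabilityMeasure μ := Measure.isProbabilityMeasure_map hX.aemeasurable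
  set T : Set Ω := {ω | Y ω ≤ X ω} with hT
  have hTm : MeasurableSet T := measurableSet_le hY hX
  have hgeq : (fun ω => if Y ω ≤ X ω then (1:ℝ) else 0) = T.indicator (fun _ => 1) := by
    funext ω; simp [Set.indicator_apply, hT, Set.mem_setOf_eq]
  have hm : MeasurableSpace.comap X inferInstance ≤ (inferInstance : MeasurableSpace Ω) :=
    hX.comap_le
  have hF_meas : Measurable (fun x : ℝ => μ (Iic x)) := by
    apply Monotone.measurable
    intro a b hab
    exact measure_mono (Iic_subset_Iic.mpr hab)
  have hFr_meas : Measurable (fun x : ℝ => (μ (Iic x)).toReal) :=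
    ENNReal.measurable_toReal.comp hF_meas
  have hmap : Measure.map (fun ω => (X ω, Y ω)) P = μ.prod μ := by
    rw [(indepFun_iff_map_prod_eq_prod_map_map hX.aemeasurable hY.aemeasurable).mp hindep,
      ← hid, ← hμ]
  rw [hgeq]
  refine ae_eq_condExp_of_forall_setIntegral_eq hm ?_ ?_ ?_ ?_
  · exact (integrable_const (1:ℝ)).indicator hTm
  · intro s _ _
    refine Integrable.integrableOn ?_
    refine Integrable.mono' (g := fun _ => 1) (integrable_const 1)
      (hFr_meas.comp hX).aestronglyMeasurable (Filter.Eventually.of_forall fun ω => ?_)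
    rw [Real.norm_eq_abs, abs_of_nonneg ENNReal.toReal_nonneg]
    exact ENNReal.toReal_le_of_le_ofReal one_pos.le (by simpa using prob_le_one)
  · rintro s ⟨A, hA, rfl⟩ _
    -- LHS: ∫ in X⁻¹A, F(X) = ((μ.prod μ) B).toReal
    have hB : MeasurableSet {q : ℝ × ℝ | q.1 ∈ A ∧ q.2 ≤ q.1} :=
      (measurable_fst hA).inter (measurableSet_le measurable_snd measurable_fst)
    have h1 : ∫ ω in X ⁻¹' A, (μ (Iic (X ω))).toReal ∂P
        = ∫ x in A, (μ (Iic x)).toReal ∂μ := by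
      rw [hμ, setIntegral_map hA hFr_meas.aestronglyMeasurable hX.aemeasurable]
    have h2 : ∫ x in A, (μ (Iic x)).toReal ∂μ = (∫⁻ x in A, μ (Iic x) ∂μ).toReal := by
      rw [integral_toReal (hF_meas.aemeasurable.restrict)
        (Filter.Eventually.of_forall fun x => measure_lt_top _ _)]
    have h3 : ∫⁻ x in A, μ (Iic x) ∂μ = (μ.prod μ) {q : ℝ × ℝ | q.1 ∈ A ∧ q.2 ≤ q.1} := by
      rw [Measure.prod_apply hB]
      rw [← lintegral_indicator hA]
      refine lintegral_congr fun x => ?_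
      by_cases hx : x ∈ A
      · simp only [Set.indicator_of_mem hx]
        congr 1
        ext y
        simp [hx, Set.mem_Iic]
      · simp [Set.indicator_of_notMem hx, hx]
    have h4 : (μ.prod μ) {q : ℝ × ℝ | q.1 ∈ A ∧ q.2 ≤ q.1} = P (X ⁻¹' A ∩ T) := by
      have hpre : (fun ω => (X ω, Y ω)) ⁻¹' {q : ℝ × ℝ | q.1 ∈ A ∧ q.2 ≤ q.1}
          = X ⁻¹' A ∩ T := by
        ext ω; simp [hT, Set.mem_setOf_eq]
      rw [← hmap, Measure.map_apply (hX.prodMk hY) hB, hpre]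
    have h5 : ∫ ω in X ⁻¹' A, T.indicator (fun _ => (1:ℝ)) ω ∂P = (P (X ⁻¹' A ∩ T)).toReal := by
      rw [integral_indicator hTm, setIntegral_const, smul_eq_mul, mul_one,
        Measure.real, Measure.restrict_apply hTm, Set.inter_comm]
    rw [h1, h2, h3, h4, h5]
  · exact StronglyMeasurable.aestronglyMeasurable
      (Measurable.stronglyMeasurable
        (hFr_meas.comp (measurable_iff_comap_le.mpr le_rfl)))

lemma measure_cdf_zero_set {μ : Measure ℝ} [IsProbabilityMeasure μ] :
    μ {x | μ (Iic x) = 0} = 0 := by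
  set S : Set ℝ := {x | μ (Iic x) = 0} with hS
  by_cases hmax : ∃ a ∈ S, ∀ x ∈ S, x ≤ a
  · obtain ⟨a, haS, ha⟩ := hmax
    refine le_antisymm (le_trans (measure_mono fun x hx => ha x hx) (le_of_eq haS)) zero_le
  · push_neg at hmax
    have hsub : S ⊆ ⋃ q : {q : ℚ // (q:ℝ) ∈ S}, Iic ((q:ℚ):ℝ) := by
      intro x hx
      obtain ⟨x', hx', hlt⟩ := hmax x hx
      obtain ⟨q, hq1, hq2⟩ := exists_rat_btwn hlt
      have hqS : ((q:ℚ):ℝ) ∈ S := by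
        refine le_antisymm (le_trans (measure_mono (Iic_subset_Iic.mpr hq2.le)) ?_) zero_le
        exact le_of_eq hx'
      exact Set.mem_iUnion.mpr ⟨⟨q, hqS⟩, hq1.le⟩
    refine le_antisymm (le_trans (measure_mono hsub) (le_of_eq ?_)) zero_le
    exact measure_iUnion_null fun q => q.2

/-- Equality case of the sharpened probability theoretic Hardy inequality:
if `(E ψ(Y)^p)^{1/p} = E ψ(Y)` (i.e. `ψ(Y)` is a.s. constant) and `E ψ(Y) > 0`,
then the root `α` equals `1` and the inequality holds with equality. -/
theorem probability_hardy_equality_case {Ω : Type*} [MeasurableSpace Ω] (P : Measure Ω)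
    [IsProbabilityMeasure P] (X Y : Ω → ℝ) (hX : Measurable X) (hY : Measurable Y)
    (hindep : IndepFun X Y P) (hid : Measure.map X P = Measure.map Y P)
    (ψ : ℝ → ℝ) (hψ : Measurable ψ) (hpos : ∀ y, 0 ≤ ψ y) (p : ℝ) (hp : 1 < p)
    (hmom : ∫⁻ ω, ENNReal.ofReal (ψ (Y ω) ^ p) ∂P < ⊤)
    (hnz : 0 < ∫ ω, ψ (Y ω) ∂P)
    (hconst : (∫ ω, ψ (Y ω) ^ p ∂P) ^ (1 / p) = ∫ ω, ψ (Y ω) ∂P)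
    (α : ℝ) (hα : α ∈ Icc (0 : ℝ) 1)
    (hroot : (∫ ω, ψ (Y ω) ∂P) * (p - 1 + α)
        = p * (∫ ω, ψ (Y ω) ^ p ∂P) ^ (1 / p) * α ^ (1 / p)) :
    α = 1 ∧
    (∫⁻ ω, ENNReal.ofReal
        (|(P[fun ω' => if Y ω' ≤ X ω' then ψ (Y ω') else 0 |
            MeasurableSpace.comap X inferInstance]) ω /
          (Measure.map X P (Iic (X ω))).toReal| ^ p) ∂P) ^ (1 / p)
      = ENNReal.ofReal (p / (p - 1 + α)) *
        (∫⁻ ω, ENNReal.ofReal (ψ (Y ω) ^ p) ∂P) ^ (1 / p) := by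
  have hp0 : (0:ℝ) < p := lt_trans one_pos hp
  set c : ℝ := ∫ ω, ψ (Y ω) ∂P with hcdef
  -- α = 1
  have hroot2 : c * (p - 1 + α) = p * c * α ^ (1/p) := by rw [hroot, hconst]
  have hα1 : α = 1 := by
    refine root_eq_one hp hα (mul_left_cancel₀ (ne_of_gt hnz) ?_)
    rw [hroot2]; ring
  refine ⟨hα1, ?_⟩
  -- ψ(Y) is a.s. constant equal to c
  have hae : (fun ω => ψ (Y ω)) =ᵐ[P] fun _ => c :=
    ae_const_of_eq P (fun ω => ψ (Y ω)) (hψ.comp hY) (fun ω => hpos _) hp hmom hconst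
  set μ : Measure ℝ := Measure.map X P with hμ
  haveI : IsProbabilityMeasure μ := Measure.isProbabilityMeasure_map hX.aemeasurable
  -- conditional expectation computation
  have h0 := condexp_indicator_le_eq P X Y hX hY hindep hid
  have hfg : (fun ω => if Y ω ≤ X ω then ψ (Y ω) else 0)
      =ᵐ[P] (c • fun ω => if Y ω ≤ X ω then (1:ℝ) else 0) := by
    refine hae.mono fun ω h => ?_
    simp only [Pi.smul_apply, smul_eq_mul]
    by_cases hyx : Y ω ≤ X ω <;> simp [hyx, h]
  have h_ce : (P[fun ω' => if Y ω' ≤ X ω' then ψ (Y ω') else 0 |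
        MeasurableSpace.comap X inferInstance])
      =ᵐ[P] fun ω => c * (μ (Iic (X ω))).toReal := by
    refine (condExp_congr_ae hfg).trans ((condExp_smul c _ _).trans ?_)
    refine h0.symm.mono fun ω h => ?_
    simp only [Pi.smul_apply, smul_eq_mul]
    rw [h]
  -- a.e. positivity of F(X)
  have hF_meas : Measurable (fun x : ℝ => μ (Iic x)) := by
    apply Monotone.measurable
    intro a b hab
    exact measure_mono (Iic_subset_Iic.mpr hab)
  have hFpos : ∀ᵐ ω ∂P, μ (Iic (X ω)) ≠ 0 := by
    have hSm : MeasurableSet {x : ℝ | μ (Iic x) = 0} :=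
      hF_meas (measurableSet_singleton 0)
    have h1 : P (X ⁻¹' {x : ℝ | μ (Iic x) = 0}) = 0 := by
      rw [← Measure.map_apply hX hSm, ← hμ]
      exact measure_cdf_zero_set
    rw [ae_iff]
    simp only [ne_eq, not_not]
    exact h1
  -- both sides equal ofReal c
  have hlhs : (fun ω => ENNReal.ofReal
        (|(P[fun ω' => if Y ω' ≤ X ω' then ψ (Y ω') else 0 |
            MeasurableSpace.comap X inferInstance]) ω /
          (μ (Iic (X ω))).toReal| ^ p))
      =ᵐ[P] fun _ => ENNReal.ofReal (c ^ p) := by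
    filter_upwards [h_ce, hFpos] with ω hce hpos'
    have ht : ((μ (Iic (X ω))).toReal : ℝ) ≠ 0 :=
      ENNReal.toReal_ne_zero.mpr ⟨hpos', measure_ne_top _ _⟩
    rw [hce, mul_div_assoc, div_self ht, mul_one, abs_of_nonneg hnz.le]
  have hIψ : ∫⁻ ω, ENNReal.ofReal (ψ (Y ω) ^ p) ∂P = ENNReal.ofReal (c ^ p) := by
    have heq : (fun ω => ENNReal.ofReal (ψ (Y ω) ^ p)) =ᵐ[P] fun _ => ENNReal.ofReal (c ^ p) := by
      filter_upwards [hae] with ω h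
      rw [show ψ (Y ω) = c from h]
    rw [lintegral_congr_ae heq, lintegral_const, measure_univ, mul_one]
  have hpow : (ENNReal.ofReal (c ^ p)) ^ (1/p) = ENNReal.ofReal c := by
    rw [ENNReal.ofReal_rpow_of_pos (Real.rpow_pos_of_pos hnz p)]
    congr 1
    rw [← Real.rpow_mul hnz.le, mul_one_div_cancel hp0.ne', Real.rpow_one]
  rw [lintegral_congr_ae hlhs, lintegral_const, measure_univ, mul_one, hpow, hIψ, hpow,
    hα1]
  rw [show p - 1 + 1 = p by ring, div_self hp0.ne', ENNReal.ofReal_one, one_mul]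
end

section
/- Let $F$ be a continuous distribution function, $p>1$, and $\psi$ a nonnegative measurable function with $\int \psi\,dF < \infty$. Then for every $x\in\mathbb{R}$, $\left(\int_{(-\infty,x]}\psi\,dF\right)^p = p\int_{(-\infty,x]}\left(\int_{(-\infty,y]}\psi\,dF\right)^{p-1}\psi(y)\,dF(y)$. -/
open MeasureTheory Set
open scoped ENNReal NNReal

/-- Pushforward of a finite atomless measure on `ℝ` by its cumulative distribution
function is the uniform (Lebesgue) measure on `(0, total mass]`. -/
lemma map_toReal_Iic (ν : Measure ℝ) [IsFiniteMeasure ν] [NullSingletonClass ν] :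
    ν.map (fun y => (ν (Iic y)).toReal) = volume.restrict (Ioc 0 (ν univ).toReal) := by
  set H : ℝ → ℝ := fun y => (ν (Iic y)).toReal with hH
  set m : ℝ := (ν univ).toReal with hm
  have hm0 : 0 ≤ m := ENNReal.toReal_nonneg
  have Hmono : Monotone H := fun a b hab =>
    ENNReal.toReal_mono (measure_ne_top ν _) (measure_mono (Iic_subset_Iic.2 hab))
  have Hmeas : Measurable H := Hmono.measurable
  have hofReal : ∀ y, ENNReal.ofReal (H y) = ν (Iic y) := fun y =>
    ENNReal.ofReal_toReal (measure_ne_top ν _)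
  haveI : IsFiniteMeasure (ν.map H) := by
    constructor
    rw [Measure.map_apply Hmeas MeasurableSet.univ]
    exact measure_lt_top ν _
  refine Measure.ext_of_Iic _ _ fun t => ?_
  rw [Measure.map_apply Hmeas measurableSet_Iic, Measure.restrict_apply measurableSet_Iic,
    inter_comm, Ioc_inter_Iic, Real.volume_Ioc]
  have hSdef : H ⁻¹' Iic t = {y | H y ≤ t} := rfl
  set S : Set ℝ := H ⁻¹' Iic t with hS
  have hmemS : ∀ {y}, y ∈ S ↔ H y ≤ t := fun {y} => Iff.rfl
  rcases lt_or_ge t 0 with ht | ht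
  · have : S = ∅ := by
      ext y
      simp only [hS, mem_preimage, mem_Iic, mem_empty_iff_false, iff_false, not_le]
      exact ht.trans_le ENNReal.toReal_nonneg
    rw [this, measure_empty, sub_zero,
      ENNReal.ofReal_eq_zero.2 (le_of_lt ((min_le_right m t).trans_lt ht))]
  · rw [sub_zero]
    by_cases hBdd : BddAbove S
    · by_cases hne : S.Nonempty
      · -- main case
        set s : ℝ := sSup S with hs
        have hub : ∀ y ∈ S, y ≤ s := fun y hy => le_csSup hBdd hy
        -- t < m
        have htm : m ⊓ t = t := by
          obtain ⟨u, hu⟩ := hBdd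
          have hunot : u + 1 ∉ S := fun h => by linarith [hu h]
          have : t < H (u + 1) := lt_of_not_ge hunot
          exact min_eq_right (this.le.trans (ENNReal.toReal_mono (measure_ne_top ν _)
            (measure_mono (subset_univ _)))) |>.symm ▸ min_eq_right
            (this.le.trans (ENNReal.toReal_mono (measure_ne_top ν _)
              (measure_mono (subset_univ _))))
        rw [htm]
        -- lower: ν (Iio s) ≤ ofReal t
        have hIio : ν (Iio s) ≤ ENNReal.ofReal t := by
          have hun : Iio s = ⋃ n : ℕ, Iic (s - 1 / (n + 1)) := by
            ext y
            simp only [mem_Iio, mem_iUnion, mem_Iic]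
            constructor
            · intro hy
              obtain ⟨n, hn⟩ := exists_nat_one_div_lt (sub_pos.2 hy)
              exact ⟨n, by linarith⟩
            · rintro ⟨n, hn⟩
              have : (0:ℝ) < 1 / (n + 1) := by positivity
              linarith
          have hmono2 : Monotone fun n : ℕ => Iic (s - 1 / ((n:ℝ) + 1)) := by
            intro a b hab
            apply Iic_subset_Iic.2
            have : 1 / ((b:ℝ) + 1) ≤ 1 / ((a:ℝ) + 1) := by
              apply one_div_le_one_div_of_le (by positivity)
              exact_mod_cast by exact_mod_cast add_le_add_left (Nat.cast_le.2 hab) 1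
            linarith
          rw [hun, hmono2.measure_iUnion]
          refine iSup_le fun n => ?_
          obtain ⟨z, hzS, hz⟩ := exists_lt_of_lt_csSup hne
            (show s - 1 / ((n:ℝ) + 1) < s by
              have : (0:ℝ) < 1 / ((n:ℝ) + 1) := by positivity
              linarith)
          calc ν (Iic (s - 1 / ((n:ℝ) + 1))) ≤ ν (Iic z) :=
                measure_mono (Iic_subset_Iic.2 hz.le)
            _ = ENNReal.ofReal (H z) := (hofReal z).symm
            _ ≤ ENNReal.ofReal t := ENNReal.ofReal_le_ofReal (hmemS.1 hzS)
        -- upper: ofReal t ≤ ν (Iic s)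
        have hIic : ENNReal.ofReal t ≤ ν (Iic s) := by
          have hin : Iic s = ⋂ n : ℕ, Iic (s + 1 / (n + 1)) := by
            ext y
            simp only [mem_Iic, mem_iInter]
            constructor
            · intro hy n
              have : (0:ℝ) < 1 / ((n:ℝ) + 1) := by positivity
              linarith
            · intro h
              by_contra hc
              push_neg at hc
              obtain ⟨n, hn⟩ := exists_nat_one_div_lt (sub_pos.2 hc)
              linarith [h n]
          have hanti : Antitone fun n : ℕ => Iic (s + 1 / ((n:ℝ) + 1)) := by
            intro a b hab
            apply Iic_subset_Iic.2
            have : 1 / ((b:ℝ) + 1) ≤ 1 / ((a:ℝ) + 1) := by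
              apply one_div_le_one_div_of_le (by positivity)
              exact_mod_cast add_le_add_left (Nat.cast_le.2 hab) 1
            linarith
          rw [hin, hanti.measure_iInter (fun n => measurableSet_Iic.nullMeasurableSet)
            ⟨0, measure_ne_top ν _⟩]
          refine le_iInf fun n => ?_
          have hnot : s + 1 / ((n:ℝ) + 1) ∉ S := by
            intro h
            have := hub _ h
            have hpos : (0:ℝ) < 1 / ((n:ℝ) + 1) := by positivity
            linarith
          have : t < H (s + 1 / ((n:ℝ) + 1)) := lt_of_not_ge hnot
          exact le_of_lt ((ENNReal.ofReal_lt_iff_lt_toReal ht (measure_ne_top ν _)).2 this)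
        have hIioIic : ν (Iio s) = ν (Iic s) := measure_congr (Iio_ae_eq_Iic)
        have hsub1 : Iio s ⊆ S := by
          intro y hy
          obtain ⟨z, hzS, hz⟩ := exists_lt_of_lt_csSup hne hy
          exact hmemS.2 ((Hmono hz.le).trans (hmemS.1 hzS))
        have hsub2 : S ⊆ Iic s := fun y hy => hub y hy
        have h1 : ν S ≤ ENNReal.ofReal t := le_trans (measure_mono hsub2) (hIioIic ▸ hIio)
        have h2 : ENNReal.ofReal t ≤ ν S :=
          le_trans (hIioIic ▸ hIic) (measure_mono hsub1)
        exact le_antisymm h1 h2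
      · -- S empty
        rw [not_nonempty_iff_eq_empty.1 hne, measure_empty]
        have hemp : (⋂ n : ℕ, Iic (-(n:ℝ))) = ∅ := by
          ext y
          simp only [mem_iInter, mem_Iic, mem_empty_iff_false, iff_false, not_forall, not_le]
          obtain ⟨n, hn⟩ := exists_nat_gt (-y)
          exact ⟨n, by linarith⟩
        have hanti : Antitone fun n : ℕ => Iic (-(n:ℝ)) := fun a b hab =>
          Iic_subset_Iic.2 (by exact_mod_cast neg_le_neg (Nat.cast_le.2 hab))
        have h0 : (⨅ n : ℕ, ν (Iic (-(n:ℝ)))) = 0 := by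
          rw [← hanti.measure_iInter (fun n => measurableSet_Iic.nullMeasurableSet)
            ⟨0, measure_ne_top ν _⟩, hemp, measure_empty]
        have hle : ENNReal.ofReal t ≤ 0 := by
          rw [← h0]
          refine le_iInf fun n => ?_
          have hnot : (-(n:ℝ)) ∉ S := by rw [not_nonempty_iff_eq_empty.1 hne]; exact notMem_empty _
          have : t < H (-(n:ℝ)) := lt_of_not_ge hnot
          exact le_of_lt ((ENNReal.ofReal_lt_iff_lt_toReal ht (measure_ne_top ν _)).2 this)
        have : ENNReal.ofReal (m ⊓ t) ≤ 0 :=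
          le_trans (ENNReal.ofReal_le_ofReal (min_le_right _ _)) hle
        exact (le_antisymm this zero_le).symm
    · -- S not bounded above: S = univ
      have hSuniv : S = univ := by
        rw [eq_univ_iff_forall]
        intro y
        obtain ⟨z, hzS, hz⟩ := not_bddAbove_iff.1 hBdd y
        exact hmemS.2 ((Hmono hz.le).trans (hmemS.1 hzS))
      rw [hSuniv]
      have hle : ν univ ≤ ENNReal.ofReal t := by
        have hun : (univ : Set ℝ) = ⋃ n : ℕ, Iic (n:ℝ) := by
          ext y
          simp only [mem_univ, mem_iUnion, mem_Iic, true_iff]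
          obtain ⟨n, hn⟩ := exists_nat_gt y
          exact ⟨n, hn.le⟩
        have hmono2 : Monotone fun n : ℕ => Iic ((n:ℝ)) := fun a b hab =>
          Iic_subset_Iic.2 (Nat.cast_le.2 hab)
        rw [hun, hmono2.measure_iUnion]
        refine iSup_le fun n => ?_
        have : ((n:ℝ)) ∈ S := hSuniv ▸ mem_univ _
        calc ν (Iic (n:ℝ)) = ENNReal.ofReal (H n) := (hofReal _).symm
          _ ≤ ENNReal.ofReal t := ENNReal.ofReal_le_ofReal (hmemS.1 this)
      have hmt : m ≤ t := by
        have := ENNReal.toReal_mono (by simp [ENNReal.ofReal_ne_top]) hle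
        rwa [ENNReal.toReal_ofReal ht] at this
      rw [min_eq_left hmt]
      exact (ENNReal.ofReal_toReal (measure_ne_top ν _)).symm

/-- The `fundamental theorem` identity: for a continuous (atomless) distribution `μ`
and a nonnegative `μ`-integrable `ψ`,
`(∫_{(-∞,x]} ψ dF)^p = p ∫_{(-∞,x]} (∫_{(-∞,y]} ψ dF)^{p-1} ψ(y) dF(y)`. -/
theorem integral_power_identity (μ : Measure ℝ) [IsProbabilityMeasure μ]
    (hatom : ∀ x : ℝ, μ {x} = 0) (p : ℝ) (hp : 1 < p)
    (ψ : ℝ → ℝ) (hψ : Measurable ψ) (hpos : ∀ y, 0 ≤ ψ y)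
    (hint : Integrable ψ μ) (x : ℝ) :
    (∫ y in Iic x, ψ y ∂μ) ^ p
      = p * ∫ y in Iic x, (∫ z in Iic y, ψ z ∂μ) ^ (p - 1) * ψ y ∂μ := by
  have hgmeas : Measurable fun y => ENNReal.ofReal (ψ y) := hψ.ennreal_ofReal
  set g : ℝ → ℝ≥0∞ := fun y => ENNReal.ofReal (ψ y) with hg
  set ν : Measure ℝ := (μ.withDensity g).restrict (Iic x) with hν
  haveI hNA : NullSingletonClass (μ.withDensity g) := by
    constructor
    intro a
    rw [withDensity_apply _ (measurableSet_singleton a)]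
    exact setLIntegral_measure_zero _ _ (hatom a)
  haveI : NullSingletonClass ν := by
    constructor
    intro a
    rw [hν, Measure.restrict_apply (measurableSet_singleton a)]
    exact measure_mono_null inter_subset_left (measure_singleton a)
  have hfin : ν univ ≠ ⊤ := by
    rw [hν, Measure.restrict_apply MeasurableSet.univ, univ_inter,
      withDensity_apply _ measurableSet_Iic]
    refine ne_top_of_le_ne_top ?_ (setLIntegral_le_lintegral _ _)
    have := hint.hasFiniteIntegral
    rw [hasFiniteIntegral_iff_norm] at this
    refine ne_of_lt (lt_of_le_of_lt (le_of_eq ?_) this)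
    congr 1 with y
    rw [Real.norm_eq_abs, abs_of_nonneg (hpos y)]
  haveI : IsFiniteMeasure ν := ⟨lt_top_iff_ne_top.2 hfin⟩
  set H : ℝ → ℝ := fun y => (ν (Iic y)).toReal with hH
  set m : ℝ := (ν univ).toReal with hm
  set G : ℝ → ℝ := fun y => ∫ z in Iic y, ψ z ∂μ with hG
  -- G y = (∫⁻ in Iic y, g).toReal
  have hGl : ∀ y : ℝ, G y = ((μ.withDensity g) (Iic y)).toReal := by
    intro y
    rw [withDensity_apply _ measurableSet_Iic]
    exact integral_eq_lintegral_of_nonneg_ae (Filter.Eventually.of_forall hpos)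
      hψ.aestronglyMeasurable
  have hHG : ∀ y ≤ x, H y = G y := by
    intro y hy
    rw [hGl]
    show (ν (Iic y)).toReal = _
    rw [hν, Measure.restrict_apply measurableSet_Iic,
      inter_eq_self_of_subset_left (Iic_subset_Iic.2 hy)]
  have hmG : m = G x := by
    rw [hGl]
    show (ν univ).toReal = _
    rw [hν, Measure.restrict_apply MeasurableSet.univ, univ_inter]
  have hm0 : 0 ≤ m := ENNReal.toReal_nonneg
  have Hmono : Monotone H := fun a b hab =>
    ENNReal.toReal_mono (ne_top_of_le_ne_top hfin (measure_mono (subset_univ _)))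
      (measure_mono (Iic_subset_Iic.2 hab))
  have Hmeas : Measurable H := Hmono.measurable
  -- step 1: the key integral computation via the pushforward
  have hrpow : Measurable fun t : ℝ => t ^ (p - 1) :=
    (Real.continuous_rpow_const (by linarith)).measurable
  have hp0 : p ≠ 0 := by linarith
  have hmap : ν.map H = volume.restrict (Ioc 0 m) := map_toReal_Iic ν
  have hI1 : (∫ t in Ioc 0 m, t ^ (p - 1)) = m ^ p / p := by
    rw [← intervalIntegral.integral_of_le hm0, integral_rpow (Or.inl (by linarith)),
      sub_add_cancel, Real.zero_rpow hp0, sub_zero]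
  have hI2 : (∫ t in Ioc 0 m, t ^ (p - 1)) = ∫ y, H y ^ (p - 1) ∂ν := by
    rw [← hmap, integral_map Hmeas.aemeasurable hrpow.aestronglyMeasurable]
  have hI3 : (∫ y, H y ^ (p - 1) ∂ν) = ∫ y in Iic x, G y ^ (p - 1) * ψ y ∂μ := by
    have hgeq : g = fun y => ((Real.toNNReal (ψ y) : ℝ≥0) : ℝ≥0∞) := by
      funext y
      rfl
    rw [hν, hgeq, restrict_withDensity measurableSet_Iic,
      integral_withDensity_eq_integral_smul hψ.real_toNNReal]
    refine setIntegral_congr_fun measurableSet_Iic fun y hy => ?_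
    rw [NNReal.smul_def, Real.coe_toNNReal _ (hpos y), smul_eq_mul, hHG y hy, mul_comm]
  rw [← hI3, ← hI2, hI1, hmG, mul_div_cancel₀ _ hp0]
end

section
/- Let $0<p<1$ and let $\psi$ be a nonnegative measurable function on $(0,\infty)$ such that $\int_x^\infty \psi < \infty$ for all $x>0$. Then $\int_0^\infty\left(\frac{1}{x}\int_x^\infty \psi\right)^p dx = \frac{p}{1-p}\int_0^\infty \left(\frac{1}{y}\int_y^\infty \psi\right)^{p-1}\psi(y)\,dy$. -/
open MeasureTheory Set ENNReal

open Filter Topology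

lemma F_meas (ψ : ℝ → ℝ) (hmeas : Measurable ψ) (hpos : ∀ y, 0 ≤ ψ y) :
    Measurable fun y : ℝ => ∫ z in Ioi y, ψ z := by
  have hL : Measurable fun y : ℝ => ∫⁻ z in Ioi y, ENNReal.ofReal (ψ z) := by
    apply Antitone.measurable
    intro a b hab
    exact lintegral_mono' (Measure.restrict_mono (Ioi_subset_Ioi hab) le_rfl) le_rfl
  have : (fun y : ℝ => ∫ z in Ioi y, ψ z)
      = fun y => (∫⁻ z in Ioi y, ENNReal.ofReal (ψ z)).toReal := by
    funext y
    by_cases h : IntegrableOn ψ (Ioi y)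
    · rw [← ofReal_integral_eq_lintegral_ofReal h (ae_of_all _ hpos),
        ENNReal.toReal_ofReal (setIntegral_nonneg measurableSet_Ioi fun z _ => hpos z)]
    · rw [integral_undef h]
      have : ∫⁻ z in Ioi y, ENNReal.ofReal (ψ z) = ∞ := by
        by_contra hfin
        exact h ⟨hmeas.aestronglyMeasurable,
          by simpa [HasFiniteIntegral, Real.enorm_eq_ofReal (hpos _)] using
            lt_top_iff_ne_top.2 hfin⟩
      simp [this]
  rw [this]
  exact hL.ennreal_toReal


lemma key_lemma (p : ℝ) (hp0 : 0 < p) (hp1 : p < 1) (ψ : ℝ → ℝ) (hmeas : Measurable ψ)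
    (hpos : ∀ y, 0 ≤ ψ y) (hint : ∀ x : ℝ, 0 < x → IntegrableOn ψ (Ioi x))
    (x : ℝ) (hx : 0 < x) :
    ∫⁻ y in Ioi x, ENNReal.ofReal ((∫ z in Ioi y, ψ z) ^ (p - 1) * ψ y)
      = ENNReal.ofReal ((∫ z in Ioi x, ψ z) ^ p / p) := by
  set F : ℝ → ℝ := fun y => ∫ z in Ioi y, ψ z with hF
  have hFnn : ∀ y, 0 ≤ F y := fun y => setIntegral_nonneg measurableSet_Ioi fun z _ => hpos z
  have hsplit : ∀ s t : ℝ, 0 < s → s ≤ t → F s = (∫ z in Ioc s t, ψ z) + F t := by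
    intro s t hs hst
    rw [hF]
    rw [← setIntegral_union (Ioc_disjoint_Ioi le_rfl) measurableSet_Ioi
        ((hint s hs).mono_set Ioc_subset_Ioi_self) (hint t (hs.trans_le hst)),
      Ioc_union_Ioi_eq_Ioi hst]
  have hIocnn : ∀ s t : ℝ, 0 ≤ ∫ z in Ioc s t, ψ z := fun s t =>
    setIntegral_nonneg measurableSet_Ioc fun z _ => hpos z
  have hanti : ∀ s t : ℝ, 0 < s → s ≤ t → F t ≤ F s := by
    intro s t hs hst
    rw [hsplit s t hs hst]
    have := hIocnn s t
    linarith
  -- continuous version Φ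
  set ψ' : ℝ → ℝ := (Ioi x).indicator ψ with hψ'
  have hψ'int : Integrable ψ' := (hint x hx).integrable_indicator measurableSet_Ioi
  set Φ : ℝ → ℝ := fun t => F x - ∫ s in x..t, ψ' s with hΦdef
  have hΦcont : Continuous Φ := continuous_const.sub (hψ'int.continuous_primitive x)
  have hΦeq : ∀ t, x ≤ t → Φ t = F t := by
    intro t ht
    have h1 : ∫ s in x..t, ψ' s = ∫ z in Ioc x t, ψ z := by
      rw [intervalIntegral.integral_of_le ht]
      refine setIntegral_congr_fun measurableSet_Ioc fun z hz => ?_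
      exact indicator_of_mem (mem_Ioi.2 hz.1) ψ
    have h2 := hsplit x t hx ht
    rw [hΦdef]
    simp only [h1]
    linarith
  have hΦlt : ∀ t, t ≤ x → Φ t = F x := by
    intro t ht
    have h0 : ∫ z in Ioc t x, ψ' z = 0 := by
      refine setIntegral_eq_zero_of_forall_eq_zero fun z hz => ?_
      exact indicator_of_notMem (by simpa using hz.2) ψ
    have : ∫ s in x..t, ψ' s = 0 := by
      rw [intervalIntegral.integral_of_ge ht, h0, neg_zero]
    simp [hΦdef, this]
  have hΦnn : ∀ t, 0 ≤ Φ t := by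
    intro t
    rcases le_total t x with h | h
    · rw [hΦlt t h]; exact hFnn x
    · rw [hΦeq t h]; exact hFnn t
  have hΦub : ∀ t, Φ t ≤ F x := by
    intro t
    rcases le_total t x with h | h
    · rw [hΦlt t h]
    · rw [hΦeq t h]; exact hanti x t hx h
  have hΦx : Φ x = F x := hΦeq x le_rfl
  -- the measure ν
  set ν : Measure ℝ := (volume.restrict (Ioi x)).withDensity fun y => ENNReal.ofReal (ψ y)
    with hνdef
  have hν_apply : ∀ s : Set ℝ, MeasurableSet s →
      ν s = ∫⁻ y in s ∩ Ioi x, ENNReal.ofReal (ψ y) := by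
    intro s hs
    rw [hνdef, withDensity_apply _ hs, Measure.restrict_restrict hs]
  have hν_Ioi : ∀ t, x ≤ t → ν (Ioi t) = ENNReal.ofReal (F t) := by
    intro t ht
    rw [hν_apply _ measurableSet_Ioi, Ioi_inter_Ioi, max_eq_left ht,
      ← ofReal_integral_eq_lintegral_ofReal (hint t (hx.trans_le ht)) (ae_of_all _ hpos)]
  have hνuniv : ν univ = ENNReal.ofReal (F x) := by
    rw [hν_apply _ MeasurableSet.univ, univ_inter,
      ← ofReal_integral_eq_lintegral_ofReal (hint x hx) (ae_of_all _ hpos)]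
  haveI : IsFiniteMeasure ν := ⟨by rw [hνuniv]; exact ofReal_lt_top⟩
  have hsmall : ∀ a : ℝ, 0 < a → ∃ t : ℝ, x ≤ t ∧ F t < a := by
    intro a ha
    have h1 : Tendsto (fun n : ℕ => ν (Ioi (x + n))) atTop
        (𝓝 (ν (⋂ n : ℕ, Ioi (x + (n : ℝ))))) := by
      refine tendsto_measure_iInter_atTop (fun n => measurableSet_Ioi.nullMeasurableSet)
        (fun m n hmn => Ioi_subset_Ioi (by have := (Nat.cast_le (α := ℝ)).2 hmn; linarith))
        ⟨0, measure_ne_top ν _⟩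
    have h2 : (⋂ n : ℕ, Ioi (x + (n : ℝ))) = ∅ := by
      ext t
      simp only [mem_iInter, mem_Ioi, mem_empty_iff_false, iff_false, not_forall, not_lt]
      obtain ⟨n, hn⟩ := exists_nat_gt (t - x)
      exact ⟨n, by linarith⟩
    rw [h2, measure_empty] at h1
    have h3 : ∀ᶠ n : ℕ in atTop, ν (Ioi (x + n)) < ENNReal.ofReal a :=
      h1.eventually_lt_const (by simpa using ofReal_pos.2 ha)
    obtain ⟨n, hn⟩ := h3.exists
    refine ⟨x + n, le_add_of_nonneg_right (Nat.cast_nonneg n), ?_⟩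
    rw [hν_Ioi _ (le_add_of_nonneg_right (Nat.cast_nonneg n))] at hn
    by_contra hcon
    exact absurd (ofReal_le_ofReal (not_lt.1 hcon)) (not_le.2 hn)
  have hmap : Measure.map Φ ν = volume.restrict (Ioo 0 (F x)) := by
    haveI : IsFiniteMeasure (Measure.map Φ ν) := by
      constructor
      rw [Measure.map_apply hΦcont.measurable MeasurableSet.univ]
      exact measure_lt_top ν _
    refine Measure.ext_of_Iic _ _ fun a => ?_
    rw [Measure.map_apply hΦcont.measurable measurableSet_Iic,
      Measure.restrict_apply' measurableSet_Ioo]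
    by_cases ha0 : a < 0
    · have h1 : Φ ⁻¹' Iic a = ∅ := by
        ext t; simp only [mem_preimage, mem_Iic, mem_empty_iff_false, iff_false, not_le]
        exact lt_of_lt_of_le ha0 (hΦnn t)
      have h2 : Iic a ∩ Ioo 0 (F x) = ∅ := by
        ext t
        simp only [mem_inter_iff, mem_Iic, mem_Ioo, mem_empty_iff_false, iff_false, not_and]
        intro h1 h2; linarith
      rw [h1, h2]; simp
    push_neg at ha0
    by_cases haF : F x ≤ a
    · have h1 : Φ ⁻¹' Iic a = univ := eq_univ_of_forall fun t => (hΦub t).trans haF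
      have h2 : Iic a ∩ Ioo 0 (F x) = Ioo 0 (F x) := by
        refine inter_eq_self_of_subset_right fun t ht => le_trans (le_of_lt ht.2) haF
      rw [h1, h2, hνuniv, Real.volume_Ioo, sub_zero]
    push_neg at haF
    have hRHS : Iic a ∩ Ioo 0 (F x) = Ioc 0 a := by
      ext t
      simp only [mem_inter_iff, mem_Iic, mem_Ioo, mem_Ioc]
      constructor
      · rintro ⟨h1, h2, h3⟩; exact ⟨h2, h1⟩
      · rintro ⟨h1, h2⟩; exact ⟨h2, h1, lt_of_le_of_lt h2 haF⟩
    rw [hRHS, Real.volume_Ioc, sub_zero]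
    by_cases hne : (Φ ⁻¹' Iic a ∩ Ioi x).Nonempty
    · set S := Φ ⁻¹' Iic a ∩ Ioi x with hS
      set τ := sInf S with hτ
      have hbdd : BddBelow S := ⟨x, fun z hz => le_of_lt hz.2⟩
      have hτx : x ≤ τ := le_csInf hne fun z hz => hz.2.le
      have hτS : Φ τ ≤ a := by
        have hcl : IsClosed (Φ ⁻¹' Iic a) := isClosed_Iic.preimage hΦcont
        have h1 : τ ∈ closure S := csInf_mem_closure hne hbdd
        have h2 : closure S ⊆ Φ ⁻¹' Iic a := by
          rw [← hcl.closure_eq]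
          exact closure_mono inter_subset_left
        exact h2 h1
      have hτgt : x < τ := by
        rcases lt_or_eq_of_le hτx with h | h
        · exact h
        · exfalso; rw [← h, hΦx] at hτS; exact absurd hτS (not_le.2 haF)
      have hFτ : F τ = a := by
        have h1 : F τ ≤ a := by rw [← hΦeq τ hτx]; exact hτS
        have h2 : a ≤ F τ := by
          have hcl2 : IsClosed (Φ ⁻¹' Ici a) := isClosed_Ici.preimage hΦcont
          have hsub : Ioo x τ ⊆ Φ ⁻¹' Ici a := by
            intro z hz
            have hzS : z ∉ S := fun h => absurd (csInf_le hbdd h) (not_le.2 hz.2)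
            have : ¬ Φ z ≤ a := fun h => hzS ⟨h, hz.1⟩
            exact le_of_lt (not_le.1 this)
          have hτcl : τ ∈ closure (Ioo x τ) := by
            rw [closure_Ioo (ne_of_lt hτgt)]
            exact ⟨hτx, le_rfl⟩
          have h3 : closure (Ioo x τ) ⊆ Φ ⁻¹' Ici a := by
            rw [← hcl2.closure_eq]; exact closure_mono hsub
          have := h3 hτcl
          rwa [mem_preimage, mem_Ici, hΦeq τ hτx] at this
        linarith
      have hlow : ENNReal.ofReal a ≤ ν (Φ ⁻¹' Iic a) := by
        rw [← hFτ, ← hν_Ioi τ hτx]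
        refine measure_mono fun z hz => ?_
        have hz' : τ < z := hz
        rw [mem_preimage, mem_Iic, hΦeq z (hτx.trans hz'.le)]
        exact hanti τ z (hx.trans hτgt) hz'.le
      have hup : ν (Φ ⁻¹' Iic a) ≤ ENNReal.ofReal a := by
        have hνsing : ν {τ} = 0 := by
          rw [hν_apply _ (measurableSet_singleton τ)]
          refine setLIntegral_measure_zero _ _ (measure_mono_null inter_subset_left ?_)
          exact Real.volume_singleton
        have h1 : ν (Φ ⁻¹' Iic a) = ν S := by
          rw [hν_apply _ (hΦcont.measurable measurableSet_Iic),
            hν_apply _ ((hΦcont.measurable measurableSet_Iic).inter measurableSet_Ioi)]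
          rw [inter_assoc, inter_self]
        have h2 : S ⊆ {τ} ∪ Ioi τ := by
          intro z hz
          rcases eq_or_lt_of_le (csInf_le hbdd hz) with h | h
          · exact Or.inl (by simp [← h, hτ])
          · exact Or.inr h
        calc ν (Φ ⁻¹' Iic a) = ν S := h1
          _ ≤ ν ({τ} ∪ Ioi τ) := measure_mono h2
          _ ≤ ν {τ} + ν (Ioi τ) := measure_union_le _ _
          _ = ENNReal.ofReal a := by rw [hνsing, zero_add, hν_Ioi τ hτx, hFτ]
      exact le_antisymm hup hlow
    · -- empty case: a must be 0
      have ha0' : a = 0 := by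
        by_contra hane
        have hapos : 0 < a := lt_of_le_of_ne ha0 (Ne.symm hane)
        obtain ⟨t, ht, hFt⟩ := hsmall a hapos
        refine hne ⟨t + 1, ?_, ?_⟩
        · rw [mem_preimage, mem_Iic, hΦeq _ (ht.trans (by linarith))]
          exact le_of_lt (lt_of_le_of_lt (hanti t (t + 1) (hx.trans_le ht) (by linarith)) hFt)
        · exact mem_Ioi.2 (by linarith)
      have hEmpty : ν (Φ ⁻¹' Iic a) = 0 := by
        rw [hν_apply _ (hΦcont.measurable measurableSet_Iic),
          not_nonempty_iff_eq_empty.1 hne]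
        simp
      rw [hEmpty, ha0']; simp
  have hg : Measurable fun t : ℝ => ENNReal.ofReal (t ^ (p - 1)) := by fun_prop
  have hψE : Measurable fun y : ℝ => ENNReal.ofReal (ψ y) := ENNReal.measurable_ofReal.comp hmeas
  calc ∫⁻ y in Ioi x, ENNReal.ofReal (F y ^ (p - 1) * ψ y)
      = ∫⁻ y in Ioi x,
          ((fun y => ENNReal.ofReal (ψ y)) * fun y => ENNReal.ofReal (Φ y ^ (p - 1))) y := by
        refine setLIntegral_congr_fun measurableSet_Ioi (fun y hy => ?_)
        have hy' : x < y := hy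
        simp only [Pi.mul_apply]
        rw [hΦeq y hy'.le, mul_comm (F y ^ (p - 1)) (ψ y), ENNReal.ofReal_mul (hpos y)]
    _ = ∫⁻ y, ENNReal.ofReal (Φ y ^ (p - 1)) ∂ν := by
        rw [hνdef]
        exact (lintegral_withDensity_eq_lintegral_mul (volume.restrict (Ioi x)) hψE
          (g := fun y => ENNReal.ofReal (Φ y ^ (p - 1))) (hg.comp hΦcont.measurable)).symm
    _ = ∫⁻ t, ENNReal.ofReal (t ^ (p - 1)) ∂(Measure.map Φ ν) :=
        (lintegral_map hg hΦcont.measurable).symm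
    _ = ∫⁻ t in Ioo 0 (F x), ENNReal.ofReal (t ^ (p - 1)) := by rw [hmap]
    _ = ENNReal.ofReal (F x ^ p / p) := by
        by_cases hc : 0 < F x
        · have hII : IntervalIntegrable (fun t : ℝ => t ^ (p - 1)) volume 0 (F x) :=
            intervalIntegral.intervalIntegrable_rpow' (by linarith)
          have hInt : IntegrableOn (fun t : ℝ => t ^ (p - 1)) (Ioo 0 (F x)) := by
            have := hII.1
            exact this.mono_set Ioo_subset_Ioc_self
          rw [← ofReal_integral_eq_lintegral_ofReal hInt
            ((ae_restrict_iff' measurableSet_Ioo).2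
              (ae_of_all _ fun t ht => Real.rpow_nonneg ht.1.le _))]
          congr 1
          rw [← integral_Ioc_eq_integral_Ioo, ← intervalIntegral.integral_of_le hc.le,
            integral_rpow (Or.inl (by linarith))]
          have hpe : p - 1 + 1 = p := by ring
          rw [hpe, Real.zero_rpow hp0.ne', sub_zero]
        · have hc0 : F x = 0 := le_antisymm (not_lt.1 hc) (hFnn x)
          rw [hc0]
          simp [Real.zero_rpow hp0.ne']
/-- Identity from the smoothed proof of the reversed Hardy inequality for `0 < p < 1`:
`∫_0^∞ ((1/x)∫_x^∞ ψ)^p dx = p/(1-p) ∫_0^∞ ((1/y)∫_y^∞ ψ)^{p-1} ψ(y) dy`. -/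
theorem hardy_identity_reversed (p : ℝ) (hp0 : 0 < p) (hp1 : p < 1) (ψ : ℝ → ℝ)
    (hmeas : Measurable ψ) (hpos : ∀ y, 0 ≤ ψ y)
    (hint : ∀ x : ℝ, 0 < x → IntegrableOn ψ (Ioi x)) :
    ∫⁻ x in Ioi (0 : ℝ),
        ENNReal.ofReal (((∫ y in Ioi x, ψ y) / x) ^ p)
      = ENNReal.ofReal (p / (1 - p)) *
        ∫⁻ y in Ioi (0 : ℝ),
          ENNReal.ofReal (((∫ z in Ioi y, ψ z) / y) ^ (p - 1) * ψ y) := by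
  have hFm : Measurable fun y : ℝ => ∫ z in Ioi y, ψ z := F_meas ψ hmeas hpos
  set F : ℝ → ℝ := fun y => ∫ z in Ioi y, ψ z with hF
  have hFnn : ∀ y, 0 ≤ F y := fun y => setIntegral_nonneg measurableSet_Ioi fun z _ => hpos z
  have hkey : ∀ x : ℝ, 0 < x →
      ∫⁻ y in Ioi x, ENNReal.ofReal (F y ^ (p - 1) * ψ y)
        = ENNReal.ofReal (F x ^ p / p) := fun x hx =>
    key_lemma p hp0 hp1 ψ hmeas hpos hint x hx
  set g : ℝ → ℝ≥0∞ := fun y => ENNReal.ofReal (F y ^ (p - 1) * ψ y) with hg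
  have hgmeas : Measurable g := by fun_prop
  have hgtop : ∀ y, g y ≠ ⊤ := fun y => ofReal_ne_top
  set c : ℝ → ℝ≥0∞ := fun x => (ENNReal.ofReal (x ^ p))⁻¹ with hc
  have hcmeas : Measurable c := by fun_prop
  have hctop : ∀ x : ℝ, 0 < x → c x ≠ ⊤ := by
    intro x hx
    rw [hc]
    simp only [ne_eq, ENNReal.inv_eq_top]
    exact fun h => absurd (ofReal_pos.2 (Real.rpow_pos_of_pos hx p)) (by simp [h])
  -- step 1 : pointwise rewriting of LHS integrand
  have hstep : ∀ x : ℝ, 0 < x →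
      ENNReal.ofReal ((F x / x) ^ p)
        = ENNReal.ofReal p * ∫⁻ y in Ioi (0 : ℝ), c x * (Ioi x).indicator g y := by
    intro x hx
    have hxp : (0 : ℝ) < x ^ p := Real.rpow_pos_of_pos hx p
    have h1 : (F x / x) ^ p = p * ((x ^ p)⁻¹ * (F x ^ p / p)) := by
      rw [Real.div_rpow (hFnn x) hx.le]
      field_simp
    have h2 : ∫⁻ y in Ioi (0 : ℝ), (Ioi x).indicator g y = ∫⁻ y in Ioi x, g y := by
      rw [lintegral_indicator measurableSet_Ioi, Measure.restrict_restrict measurableSet_Ioi,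
        Ioi_inter_Ioi, max_eq_left hx.le]
    rw [lintegral_const_mul' _ _ (hctop x hx), h2, hkey x hx, h1,
      ENNReal.ofReal_mul hp0.le, ENNReal.ofReal_mul (by positivity),
      ENNReal.ofReal_inv_of_pos hxp]
  -- rewrite LHS as a double integral
  have hLHS : ∫⁻ x in Ioi (0 : ℝ), ENNReal.ofReal ((F x / x) ^ p)
      = ENNReal.ofReal p *
        ∫⁻ x in Ioi (0 : ℝ), ∫⁻ y in Ioi (0 : ℝ), c x * (Ioi x).indicator g y := by
    rw [← lintegral_const_mul' _ _ (ofReal_ne_top (r := p))]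
    exact setLIntegral_congr_fun measurableSet_Ioi (fun x hx => hstep x hx)
  rw [hLHS]
  -- Tonelli
  have huncurry : Measurable (Function.uncurry fun x y : ℝ => c x * (Ioi x).indicator g y) := by
    have hind : (fun z : ℝ × ℝ => (Ioi z.1).indicator g z.2)
        = {q : ℝ × ℝ | q.1 < q.2}.indicator fun z => g z.2 := by
      funext z
      by_cases h : z.1 < z.2 <;>
        simp [Set.indicator_apply, h, mem_Ioi]
    have h1 : Measurable fun z : ℝ × ℝ => (Ioi z.1).indicator g z.2 := by
      rw [hind]
      exact (hgmeas.comp measurable_snd).indicator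
        (measurableSet_lt measurable_fst measurable_snd)
    exact (hcmeas.comp measurable_fst).mul h1
  rw [lintegral_lintegral_swap huncurry.aemeasurable]
  -- inner integral computation
  have hinner : ∀ y : ℝ, 0 < y →
      ∫⁻ x in Ioi (0 : ℝ), c x * (Ioi x).indicator g y
        = (ENNReal.ofReal (((∫ z in Ioi y, ψ z) / y) ^ (p - 1) * ψ y)) *
            ENNReal.ofReal (1 / (1 - p)) := by
    intro y hy
    have h1 : ∀ x : ℝ, c x * (Ioi x).indicator g y
        = (Iio y).indicator (fun x => c x * g y) x := by
      intro x
      by_cases h : x < y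
      · simp [Set.indicator_apply, h, mem_Ioi, mem_Iio]
      · simp [Set.indicator_apply, h, mem_Ioi, mem_Iio]
    simp only [h1]
    rw [lintegral_indicator measurableSet_Iio, Measure.restrict_restrict measurableSet_Iio]
    have h2 : Iio y ∩ Ioi (0 : ℝ) = Ioo 0 y := by
      ext t; simp [mem_Ioo, mem_Iio, mem_Ioi, and_comm]
    rw [h2, lintegral_mul_const' _ _ (hgtop y)]
    -- compute ∫⁻ x in Ioo 0 y, c x
    have h3 : ∫⁻ x in Ioo 0 y, c x = ENNReal.ofReal (y ^ (1 - p) / (1 - p)) := by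
      have h4 : ∫⁻ x in Ioo 0 y, c x = ∫⁻ x in Ioo 0 y, ENNReal.ofReal (x ^ (-p)) := by
        refine setLIntegral_congr_fun measurableSet_Ioo (fun t ht => ?_)
        simp only [hc]
        rw [← ENNReal.ofReal_inv_of_pos (Real.rpow_pos_of_pos ht.1 p),
          ← Real.rpow_neg ht.1.le]
      have hII : IntervalIntegrable (fun t : ℝ => t ^ (-p)) volume 0 y :=
        intervalIntegral.intervalIntegrable_rpow' (by linarith)
      have hInt : IntegrableOn (fun t : ℝ => t ^ (-p)) (Ioo 0 y) :=
        hII.1.mono_set Ioo_subset_Ioc_self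
      rw [h4, ← ofReal_integral_eq_lintegral_ofReal hInt
        ((ae_restrict_iff' measurableSet_Ioo).2
          (ae_of_all _ fun t ht => Real.rpow_nonneg ht.1.le _))]
      congr 1
      rw [← integral_Ioc_eq_integral_Ioo, ← intervalIntegral.integral_of_le hy.le,
        integral_rpow (Or.inl (by linarith))]
      have hpe : -p + 1 = 1 - p := by ring
      rw [hpe, Real.zero_rpow (by linarith : (1 : ℝ) - p ≠ 0), sub_zero]
    rw [h3]
    -- final pointwise algebra
    have hyp : (F y / y) ^ (p - 1) = F y ^ (p - 1) * y ^ (1 - p) := by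
      rw [Real.div_rpow (hFnn y) hy.le, show p - 1 = -(1 - p) by ring,
        Real.rpow_neg hy.le, div_eq_mul_inv, inv_inv]
    simp only [hg]
    have hnn1 : 0 ≤ y ^ (1 - p) / (1 - p) :=
      div_nonneg (Real.rpow_nonneg hy.le _) (by linarith)
    rw [← ENNReal.ofReal_mul hnn1,
      ← ENNReal.ofReal_mul (mul_nonneg (Real.rpow_nonneg (div_nonneg (hFnn y) hy.le) _)
        (hpos y))]
    congr 1
    show y ^ (1 - p) / (1 - p) * (F y ^ (p - 1) * ψ y)
      = (F y / y) ^ (p - 1) * ψ y * (1 / (1 - p))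
    rw [hyp]
    ring
  have hcongr : ∫⁻ y in Ioi (0 : ℝ), ∫⁻ x in Ioi (0 : ℝ), c x * (Ioi x).indicator g y
      = ∫⁻ y in Ioi (0 : ℝ),
          (ENNReal.ofReal (((∫ z in Ioi y, ψ z) / y) ^ (p - 1) * ψ y)) *
            ENNReal.ofReal (1 / (1 - p)) :=
    setLIntegral_congr_fun measurableSet_Ioi (fun y hy => hinner y hy)
  rw [hcongr, lintegral_mul_const' _ _ (ofReal_ne_top (r := 1 / (1 - p)))]
  rw [← mul_comm (ENNReal.ofReal (1 / (1 - p))) _, ← mul_assoc,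
    ← ENNReal.ofReal_mul hp0.le]
  congr 2
  rw [mul_one_div]
end

section
/- Let $0<p<1$ and let $(a_i)_{i\ge 1}$ be nonnegative reals. Then $\left(1+\frac{1}{1-p}\right)\left(\sum_{i=1}^\infty a_i\right)^p + \sum_{j=2}^\infty\left(\frac{1}{j}\sum_{h=j}^\infty a_h\right)^p \ge \left(\frac{p}{1-p}\right)^p \sum_{i=1}^\infty a_i^p$. -/
open ENNReal MeasureTheory

lemma bern_aux {p t : ℝ} (hp0 : 0 ≤ p) (hp1 : p ≤ 1) (ht : 0 ≤ t) :
    t ^ p ≤ 1 - p + p * t := by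
  have h := Real.geom_mean_le_arith_mean2_weighted (w₁ := 1 - p) (w₂ := p)
    (p₁ := 1) (p₂ := t) (by linarith) hp0 zero_le_one ht (by ring)
  simpa using h

lemma conc_aux {p x y : ℝ} (hp0 : 0 < p) (hp1 : p < 1) (hx : 0 < x) (hy0 : 0 ≤ y)
    (hyx : y ≤ x) : p * (x - y) * x ^ (p - 1) ≤ x ^ p - y ^ p := by
  have ht : (0:ℝ) ≤ y / x := div_nonneg hy0 hx.le
  have h := bern_aux hp0.le hp1.le ht
  rw [Real.div_rpow hy0 hx.le] at h
  have hxp : (0:ℝ) < x ^ p := Real.rpow_pos_of_pos hx p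
  have h2 : y ^ p ≤ (1 - p + p * (y / x)) * x ^ p := by
    rw [div_le_iff₀ hxp] at h; exact h
  have hx1 : x ^ (p - 1) = x ^ p / x := Real.rpow_sub_one hx.ne' p
  rw [hx1]
  have hxne : x ≠ 0 := hx.ne'
  have hexp : (1 - p + p * (y / x)) * x ^ p = x ^ p - p * x ^ p + p * y * (x ^ p / x) := by
    field_simp
  rw [hexp] at h2
  have hxx : p * (x - y) * (x ^ p / x) = p * x ^ p - p * y * (x ^ p / x) := by
    field_simp
  rw [hxx]
  linarith

lemma delta_aux {p x : ℝ} (hp0 : 0 < p) (hp1 : p < 1) (hx : 0 < x) :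
    (x + 1) ^ (1 - p) ≤ x ^ (1 - p) + (1 - p) * x ^ (-p) := by
  set q : ℝ := 1 - p with hq
  have hq0 : 0 ≤ q := by simp [hq]; linarith
  have ht : (0:ℝ) ≤ 1 + 1 / x := by positivity
  have h := bern_aux hq0 (by simp [hq]; linarith) ht
  -- (1+1/x)^q ≤ 1 - q + q*(1+1/x) = 1 + q/x
  have hmul : (x + 1) ^ q = x ^ q * (1 + 1 / x) ^ q := by
    rw [← Real.mul_rpow hx.le ht]
    congr 1
    field_simp
  have hxq : (0:ℝ) < x ^ q := Real.rpow_pos_of_pos hx q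
  have hle : (x + 1) ^ q ≤ x ^ q * (1 - q + q * (1 + 1 / x)) := by
    rw [hmul]
    exact mul_le_mul_of_nonneg_left h hxq.le
  have hxqm : x ^ q / x = x ^ (-p) := by
    rw [← Real.rpow_sub_one hx.ne']
    congr 1; rw [hq]; ring
  calc (x + 1) ^ q ≤ x ^ q * (1 - q + q * (1 + 1 / x)) := hle
    _ = x ^ q + q * (x ^ q / x) := by
        have h1 : (1 - q + q * (1 + 1 / x)) = 1 + q * (1/x) := by ring
        rw [h1, mul_add, mul_one, div_eq_mul_inv]
        ring
    _ = x ^ q + q * x ^ (-p) := by rw [hxqm]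

lemma enn_conc {p : ℝ} (hp0 : 0 < p) (hp1 : p < 1) {x y : ℝ≥0∞} (hx : x ≠ ⊤)
    (hyx : y ≤ x) :
    ENNReal.ofReal p * ((x - y) * x ^ (p - 1)) ≤ x ^ p - y ^ p := by
  rcases eq_or_ne x 0 with h0 | h0
  · have hy : y = 0 := le_antisymm (h0 ▸ hyx) zero_le
    simp [h0, hy]
  · have hy : y ≠ ⊤ := ne_top_of_le_ne_top hx hyx
    set X := x.toReal with hX
    set Y := y.toReal with hY
    have hX0 : 0 < X := ENNReal.toReal_pos h0 hx
    have hY0 : 0 ≤ Y := ENNReal.toReal_nonneg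
    have hYX : Y ≤ X := ENNReal.toReal_mono hx hyx
    have hxX : x = ENNReal.ofReal X := (ENNReal.ofReal_toReal hx).symm
    have hyY : y = ENNReal.ofReal Y := (ENNReal.ofReal_toReal hy).symm
    rw [hxX, hyY]
    rw [← ENNReal.ofReal_sub _ hY0]
    rw [ENNReal.ofReal_rpow_of_pos hX0]
    rw [ENNReal.ofReal_rpow_of_nonneg hX0.le hp0.le,
      ENNReal.ofReal_rpow_of_nonneg hY0 hp0.le]
    rw [← ENNReal.ofReal_mul (by linarith : (0:ℝ) ≤ X - Y),
      ← ENNReal.ofReal_mul hp0.le, ← ENNReal.ofReal_sub _ (Real.rpow_nonneg hY0 p)]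
    exact ENNReal.ofReal_le_ofReal
      (by simpa [mul_assoc] using conc_aux hp0 hp1 hX0 hY0 hYX)

lemma enn_delta {p : ℝ} (hp0 : 0 < p) (hp1 : p < 1) (k : ℕ) :
    ((k : ℝ≥0∞) + 2) ^ (1 - p) - ((k : ℝ≥0∞) + 1) ^ (1 - p)
      ≤ ENNReal.ofReal (1 - p) * (((k : ℝ≥0∞) + 1) ^ p)⁻¹ := by
  set X : ℝ := (k : ℝ) + 1 with hXdef
  have hX0 : 0 < X := by positivity
  have h1 : ((k : ℝ≥0∞) + 1) = ENNReal.ofReal X := by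
    rw [hXdef, ENNReal.ofReal_add (by positivity) zero_le_one]
    simp
  have h2 : ((k : ℝ≥0∞) + 2) = ENNReal.ofReal (X + 1) := by
    rw [ENNReal.ofReal_add hX0.le zero_le_one, ← h1, ENNReal.ofReal_one]
    ring
  rw [h1, h2, ENNReal.ofReal_rpow_of_pos (by positivity),
    ENNReal.ofReal_rpow_of_pos hX0, ENNReal.ofReal_rpow_of_pos hX0,
    ← ENNReal.ofReal_inv_of_pos (Real.rpow_pos_of_pos hX0 p),
    ← ENNReal.ofReal_sub _ (Real.rpow_nonneg hX0.le _),
    ← ENNReal.ofReal_mul (by linarith)]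
  apply ENNReal.ofReal_le_ofReal
  have hd := delta_aux hp0 hp1 hX0
  have hneg : X ^ (-p) = (X ^ p)⁻¹ := Real.rpow_neg hX0.le p
  linarith [hd, hneg ▸ hd]

lemma tele_sum {g : ℕ → ℝ≥0∞} (hg : ∀ n, g (n + 1) ≤ g n) (k : ℕ) :
    ∑' n, (if k ≤ n then g n - g (n + 1) else 0) ≤ g k := by
  apply tsum_le_of_sum_le' zero_le
  intro s
  obtain ⟨N, hN⟩ := s.exists_nat_subset_range
  have hsub : ∑ n ∈ s, (if k ≤ n then g n - g (n + 1) else 0)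
      ≤ ∑ n ∈ Finset.range N, (if k ≤ n then g n - g (n + 1) else 0) :=
    Finset.sum_le_sum_of_subset hN
  refine hsub.trans ?_
  have key : ∀ N : ℕ, (∑ n ∈ Finset.range N, (if k ≤ n then g n - g (n + 1) else 0))
      + g (max k N) = g k := by
    intro N
    induction N with
    | zero => simp
    | succ N ih =>
      rw [Finset.sum_range_succ]
      by_cases hkN : k ≤ N
      · rw [if_pos hkN]
        have hmax : max k N = N := max_eq_right hkN
        have hmax' : max k (N + 1) = N + 1 := max_eq_right (by omega)
        rw [hmax'] at *
        rw [hmax] at ih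
        rw [add_assoc, tsub_add_cancel_of_le (hg N), ih]
      · rw [if_neg hkN]
        have hmax : max k N = k := max_eq_left (by omega)
        have hmax' : max k (N + 1) = k := max_eq_left (by omega)
        rw [hmax'] ; rw [hmax] at ih ; rw [add_zero]; exact ih
  calc (∑ n ∈ Finset.range N, (if k ≤ n then g n - g (n + 1) else 0))
      ≤ (∑ n ∈ Finset.range N, (if k ≤ n then g n - g (n + 1) else 0)) + g (max k N) :=
        le_self_add
    _ = g k := key N

/-- Discrete reversed Hardy inequality for `0 < p < 1` (HLP Theorem 338).
Here `a i` represents `a_{i+1}`, so `∑_{h=j}^∞ a_h` with `j = m + 2` is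
`∑' i, a (i + m + 1)`. -/
theorem hardy_discrete_reversed (p : ℝ) (hp0 : 0 < p) (hp1 : p < 1)
    (a : ℕ → ℝ) (hpos : ∀ i, 0 ≤ a i) :
    ENNReal.ofReal (1 + 1 / (1 - p)) * (∑' i : ℕ, ENNReal.ofReal (a i)) ^ p
        + ∑' m : ℕ, ((((m : ℝ≥0∞) + 2))⁻¹ * ∑' i : ℕ, ENNReal.ofReal (a (i + m + 1))) ^ p
      ≥ ENNReal.ofReal (p / (1 - p)) ^ p * ∑' i : ℕ, ENNReal.ofReal (a i) ^ p := by
  have hq0 : (0:ℝ) < 1 - p := by linarith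
  set B : ℕ → ℝ≥0∞ := fun n => ∑' i : ℕ, ENNReal.ofReal (a (i + n)) with hBdef
  set W : ℕ → ℝ≥0∞ := fun n => (n : ℝ≥0∞) + 1 with hWdef
  have hWne : ∀ n, W n ≠ 0 := fun n => by simp [hWdef]
  have hWnt : ∀ n, W n ≠ ⊤ := fun n => by simp [hWdef]
  have hrec : ∀ n, B n = ENNReal.ofReal (a n) + B (n + 1) := by
    intro n
    have h := tsum_eq_zero_add' (f := fun i => ENNReal.ofReal (a (i + n)))
      ENNReal.summable
    have h2 : (∑' i : ℕ, ENNReal.ofReal (a (i + 1 + n)))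
        = ∑' i : ℕ, ENNReal.ofReal (a (i + (n + 1))) :=
      tsum_congr fun i => by rw [show i + 1 + n = i + (n + 1) from by omega]
    simpa [hBdef, h2] using h
  have hmono : ∀ n, B (n + 1) ≤ B n := fun n => by rw [hrec n]; exact le_add_self
  set s : ℕ → ℝ≥0∞ := fun n => ((W n)⁻¹ * B n) ^ p with hsdef
  set S := ∑' n, s n with hSdef
  -- rewrite the LHS
  have hinner : ∀ m : ℕ,
      ((((m : ℝ≥0∞) + 2))⁻¹ * ∑' i : ℕ, ENNReal.ofReal (a (i + m + 1))) ^ p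
        = s (m + 1) := by
    intro m
    have h1 : (∑' i : ℕ, ENNReal.ofReal (a (i + m + 1))) = B (m + 1) := rfl
    have h2 : W (m + 1) = (m : ℝ≥0∞) + 2 := by
      simp [hWdef]; push_cast; ring
    rw [h1, ← h2]
  have hB0 : (∑' i : ℕ, ENNReal.ofReal (a i)) = B 0 := rfl
  have hs0 : s 0 = B 0 ^ p := by simp [hsdef, hWdef]
  have hLHS : ENNReal.ofReal (1 + 1 / (1 - p)) * (∑' i : ℕ, ENNReal.ofReal (a i)) ^ p
      + ∑' m : ℕ, ((((m : ℝ≥0∞) + 2))⁻¹ * ∑' i : ℕ, ENNReal.ofReal (a (i + m + 1))) ^ p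
      = ENNReal.ofReal (1 / (1 - p)) * B 0 ^ p + S := by
    rw [tsum_congr hinner, hB0]
    have h4 : ENNReal.ofReal (1 + 1 / (1 - p)) = 1 + ENNReal.ofReal (1 / (1 - p)) := by
      rw [ENNReal.ofReal_add zero_le_one (by positivity), ENNReal.ofReal_one]
    have h5 : S = s 0 + ∑' m, s (m + 1) := tsum_eq_zero_add' ENNReal.summable
    rw [h4, h5, hs0]
    ring
  rw [ge_iff_le, hLHS]
  rcases eq_or_ne S ⊤ with hStop | hSne
  · rw [hStop, add_top]; exact le_top
  -- finiteness
  have hsfin : ∀ n, s n ≠ ⊤ := fun n => ne_top_of_le_ne_top hSne (ENNReal.le_tsum n)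
  have hBfin : ∀ n, B n ≠ ⊤ := by
    intro n htop
    apply hsfin n
    have : (W n)⁻¹ * B n = ⊤ := by
      rw [htop, ENNReal.mul_top (by simp [hWnt n])]
    rw [hsdef]
    simp only []
    rw [this]
    exact ENNReal.top_rpow_of_pos hp0
  set u : ℕ → ℝ≥0∞ := fun n =>
    ENNReal.ofReal (a n) * W n ^ (1 - p) * B n ^ (p - 1) with hudef
  set T := ∑' n, u n with hTdef
  -- Hölder's inequality
  have hHolder : (∑' n : ℕ, ENNReal.ofReal (a n) ^ p) ≤ T ^ p * S ^ (1 - p) := by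
    have hconj : Real.HolderConjugate (1 / p) (1 / (1 - p)) := by
      constructor
      · simp only [one_div, inv_inv, inv_one]; ring
      · exact one_div_pos.mpr hp0
      · exact one_div_pos.mpr hq0
    have hmeas : ∀ f : ℕ → ℝ≥0∞, AEMeasurable f Measure.count := fun f =>
      (measurable_of_countable f).aemeasurable
    have hH := ENNReal.lintegral_mul_le_Lp_mul_Lq (μ := Measure.count) hconj
      (f := fun n => u n ^ p) (g := fun n => s n ^ (1 - p)) (hmeas _) (hmeas _)
    rw [lintegral_count, lintegral_count, lintegral_count] at hH
    simp only [Pi.mul_apply] at hH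
    have e1 : ∀ n : ℕ, (u n ^ p) ^ (1 / p) = u n := fun n => by
      rw [← ENNReal.rpow_mul, mul_one_div_cancel hp0.ne', ENNReal.rpow_one]
    have e2 : ∀ n : ℕ, (s n ^ (1 - p)) ^ (1 / (1 - p)) = s n := fun n => by
      rw [← ENNReal.rpow_mul, mul_one_div_cancel hq0.ne', ENNReal.rpow_one]
    rw [tsum_congr e1, tsum_congr e2, one_div_one_div, one_div_one_div] at hH
    refine le_trans ?_ hH
    refine Summable.tsum_le_tsum (fun n => ?_) ENNReal.summable ENNReal.summable
    -- pointwise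
    rcases eq_or_ne (B n) 0 with hB0' | hB0'
    · have haB : ENNReal.ofReal (a n) ≤ B n := by
        rw [hrec n]; exact le_self_add
      have ha0 : ENNReal.ofReal (a n) = 0 :=
        le_antisymm (hB0' ▸ haB) zero_le
      rw [ha0, ENNReal.zero_rpow_of_pos hp0]
      exact zero_le
    · have h1 : u n ^ p
          = ENNReal.ofReal (a n) ^ p * (W n ^ (1 - p)) ^ p * (B n ^ (p - 1)) ^ p := by
        rw [hudef]
        simp only []
        rw [ENNReal.mul_rpow_of_nonneg _ _ hp0.le, ENNReal.mul_rpow_of_nonneg _ _ hp0.le]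
      have h2 : s n ^ (1 - p)
          = ((W n)⁻¹) ^ (p * (1 - p)) * B n ^ (p * (1 - p)) := by
        rw [hsdef]
        simp only []
        rw [← ENNReal.rpow_mul, ENNReal.mul_rpow_of_nonneg _ _ (by positivity)]
      have hW1 : (W n ^ (1 - p)) ^ p * ((W n)⁻¹) ^ (p * (1 - p)) = 1 := by
        rw [← ENNReal.rpow_mul, ENNReal.inv_rpow, ← ENNReal.rpow_neg,
          ← ENNReal.rpow_add _ _ (hWne n) (hWnt n),
          show (1 - p) * p + -(p * (1 - p)) = 0 from by ring, ENNReal.rpow_zero]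
      have hB1 : (B n ^ (p - 1)) ^ p * B n ^ (p * (1 - p)) = 1 := by
        rw [← ENNReal.rpow_mul, ← ENNReal.rpow_add _ _ hB0' (hBfin n),
          show (p - 1) * p + p * (1 - p) = 0 from by ring, ENNReal.rpow_zero]
      refine le_of_eq ?_
      calc ENNReal.ofReal (a n) ^ p
          = ENNReal.ofReal (a n) ^ p * ((W n ^ (1 - p)) ^ p * ((W n)⁻¹) ^ (p * (1 - p)))
            * ((B n ^ (p - 1)) ^ p * B n ^ (p * (1 - p))) := by
            rw [hW1, hB1, mul_one, mul_one]
        _ = (ENNReal.ofReal (a n) ^ p * (W n ^ (1 - p)) ^ p * (B n ^ (p - 1)) ^ p)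
            * (((W n)⁻¹) ^ (p * (1 - p)) * B n ^ (p * (1 - p))) := by ring
        _ = u n ^ p * s n ^ (1 - p) := by rw [h1, h2]
  -- Abel summation estimate
  have habel : ENNReal.ofReal p * T ≤ B 0 ^ p + ENNReal.ofReal (1 - p) * S := by
    have hstep : ∀ n, ENNReal.ofReal p * u n
        ≤ W n ^ (1 - p) * (B n ^ p - B (n + 1) ^ p) := by
      intro n
      have key := enn_conc hp0 hp1 (hBfin n) (hmono n)
      have hsub : B n - B (n + 1) = ENNReal.ofReal (a n) := by
        rw [hrec n]; exact ENNReal.add_sub_cancel_right (hBfin (n + 1))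
      rw [hsub] at key
      calc ENNReal.ofReal p * u n
          = W n ^ (1 - p) * (ENNReal.ofReal p * (ENNReal.ofReal (a n) * B n ^ (p - 1))) := by
            rw [hudef]; simp only []; ring
        _ ≤ W n ^ (1 - p) * (B n ^ p - B (n + 1) ^ p) := mul_le_mul_right key _
    set δ : ℕ → ℝ≥0∞ := fun k => W k ^ (1 - p) - (k : ℝ≥0∞) ^ (1 - p) with hδdef
    have htele : ∀ n, (∑ k ∈ Finset.range (n + 1), δ k) = W n ^ (1 - p) := by
      intro n
      induction n with
      | zero => simp [hδdef, hWdef, ENNReal.zero_rpow_of_pos hq0]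
      | succ n ih =>
        rw [Finset.sum_range_succ, ih]
        have hcast : ((n + 1 : ℕ) : ℝ≥0∞) = W n := by simp [hWdef]
        have hWle : W n ≤ W (n + 1) := by
          simp only [hWdef]
          exact add_le_add_left (by exact_mod_cast n.le_succ) 1
        have hle : W n ^ (1 - p) ≤ W (n + 1) ^ (1 - p) :=
          ENNReal.rpow_le_rpow hWle hq0.le
        rw [hδdef]
        simp only []
        rw [hcast, add_tsub_cancel_of_le hle]
    have h3 : (∑' n, W n ^ (1 - p) * (B n ^ p - B (n + 1) ^ p))
        ≤ ∑' k, δ k * B k ^ p := by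
      have hrw : ∀ n, W n ^ (1 - p) * (B n ^ p - B (n + 1) ^ p)
          = ∑' k, (if k ≤ n then δ k * (B n ^ p - B (n + 1) ^ p) else 0) := by
        intro n
        rw [← htele n, Finset.sum_mul]
        rw [tsum_eq_sum (s := Finset.range (n + 1))
          (fun k hk => if_neg (fun hle => hk (Finset.mem_range.2 (by omega))))]
        exact Finset.sum_congr rfl fun k hk =>
          (if_pos (Nat.lt_succ_iff.mp (Finset.mem_range.mp hk))).symm
      calc (∑' n, W n ^ (1 - p) * (B n ^ p - B (n + 1) ^ p))
          = ∑' n, ∑' k, (if k ≤ n then δ k * (B n ^ p - B (n + 1) ^ p) else 0) :=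
            tsum_congr hrw
        _ = ∑' k, ∑' n, (if k ≤ n then δ k * (B n ^ p - B (n + 1) ^ p) else 0) :=
            ENNReal.tsum_comm
        _ = ∑' k, δ k * ∑' n, (if k ≤ n then (B n ^ p - B (n + 1) ^ p) else 0) := by
            refine tsum_congr fun k => ?_
            rw [← ENNReal.tsum_mul_left]
            exact tsum_congr fun n => by split_ifs <;> simp
        _ ≤ ∑' k, δ k * B k ^ p := by
            refine Summable.tsum_le_tsum (fun k => mul_le_mul_right ?_ _)
              ENNReal.summable ENNReal.summable
            exact tele_sum (fun n => ENNReal.rpow_le_rpow (hmono n) hp0.le) k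
    have h4 : (∑' k, δ k * B k ^ p) ≤ B 0 ^ p + ENNReal.ofReal (1 - p) * S := by
      have hsplit : (∑' k, δ k * B k ^ p)
          = δ 0 * B 0 ^ p + ∑' k, δ (k + 1) * B (k + 1) ^ p :=
        tsum_eq_zero_add' ENNReal.summable
      have hδ0 : δ 0 = 1 := by
        simp [hδdef, hWdef, ENNReal.zero_rpow_of_pos hq0]
      have hterm : ∀ k, δ (k + 1) * B (k + 1) ^ p ≤ ENNReal.ofReal (1 - p) * s k := by
        intro k
        have hδk : δ (k + 1) ≤ ENNReal.ofReal (1 - p) * (W k ^ p)⁻¹ := by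
          have hc1 : W (k + 1) = (k : ℝ≥0∞) + 2 := by
            simp [hWdef]; push_cast; ring
          have hc2 : ((k + 1 : ℕ) : ℝ≥0∞) = (k : ℝ≥0∞) + 1 := by push_cast; ring
          have hc3 : W k = (k : ℝ≥0∞) + 1 := rfl
          rw [hδdef]
          simp only []
          rw [hc1, hc2, hc3]
          exact enn_delta hp0 hp1 k
        have hsk : ENNReal.ofReal (1 - p) * (W k ^ p)⁻¹ * B k ^ p
            = ENNReal.ofReal (1 - p) * s k := by
          rw [hsdef]
          simp only []
          rw [ENNReal.mul_rpow_of_nonneg _ _ hp0.le, ENNReal.inv_rpow, mul_assoc]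
        calc δ (k + 1) * B (k + 1) ^ p
            ≤ ENNReal.ofReal (1 - p) * (W k ^ p)⁻¹ * B k ^ p :=
              mul_le_mul' hδk (ENNReal.rpow_le_rpow (hmono k) hp0.le)
          _ = ENNReal.ofReal (1 - p) * s k := hsk
      rw [hsplit, hδ0, one_mul]
      refine add_le_add_right ?_ _
      calc (∑' k, δ (k + 1) * B (k + 1) ^ p)
          ≤ ∑' k, ENNReal.ofReal (1 - p) * s k :=
            Summable.tsum_le_tsum hterm ENNReal.summable ENNReal.summable
        _ = ENNReal.ofReal (1 - p) * S := ENNReal.tsum_mul_left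
    calc ENNReal.ofReal p * T = ∑' n, ENNReal.ofReal p * u n :=
          ENNReal.tsum_mul_left.symm
      _ ≤ ∑' n, W n ^ (1 - p) * (B n ^ p - B (n + 1) ^ p) :=
          Summable.tsum_le_tsum hstep ENNReal.summable ENNReal.summable
      _ ≤ ∑' k, δ k * B k ^ p := h3
      _ ≤ B 0 ^ p + ENNReal.ofReal (1 - p) * S := h4
  -- conclusion
  set M := ENNReal.ofReal (1 / (1 - p)) * B 0 ^ p + S with hMdef
  have hcT : ENNReal.ofReal (p / (1 - p)) * T ≤ M := by
    have h1 : ENNReal.ofReal (p / (1 - p))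
        = ENNReal.ofReal (1 / (1 - p)) * ENNReal.ofReal p := by
      rw [← ENNReal.ofReal_mul (by positivity)]
      congr 1
      field_simp
    rw [h1, mul_assoc]
    calc ENNReal.ofReal (1 / (1 - p)) * (ENNReal.ofReal p * T)
        ≤ ENNReal.ofReal (1 / (1 - p)) * (B 0 ^ p + ENNReal.ofReal (1 - p) * S) :=
          mul_le_mul_right habel _
      _ = ENNReal.ofReal (1 / (1 - p)) * B 0 ^ p
          + (ENNReal.ofReal (1 / (1 - p)) * ENNReal.ofReal (1 - p)) * S := by ring
      _ = M := by
          rw [← ENNReal.ofReal_mul (by positivity),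
            show (1 / (1 - p)) * (1 - p) = 1 from by field_simp, ENNReal.ofReal_one,
            one_mul, hMdef]
  have hSM : S ≤ M := le_add_self
  calc ENNReal.ofReal (p / (1 - p)) ^ p * ∑' i : ℕ, ENNReal.ofReal (a i) ^ p
      ≤ ENNReal.ofReal (p / (1 - p)) ^ p * (T ^ p * S ^ (1 - p)) :=
        mul_le_mul_right hHolder _
    _ = (ENNReal.ofReal (p / (1 - p)) * T) ^ p * S ^ (1 - p) := by
        rw [ENNReal.mul_rpow_of_nonneg _ _ hp0.le, mul_assoc]
    _ ≤ M ^ p * M ^ (1 - p) :=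
        mul_le_mul' (ENNReal.rpow_le_rpow hcT hp0.le)
          (ENNReal.rpow_le_rpow hSM hq0.le)
    _ = M := by
        rw [← ENNReal.rpow_add_of_nonneg _ _ hp0.le hq0.le]
        norm_num
end

section
/- Let $X$ and $Y$ be independent random variables with common distribution function $F$, let $p\ge 1$, and let $\psi$ be a measurable function. Then $\left\{E\left(\left|E\left(\frac{\psi(Y)}{F(Y)}\mathbf{1}_{[Y\ge X]}\mid X\right)\right|^p\right)\right\}^{1/p} \le p\,\left\{E(|\psi(Y)|^p)\right\}^{1/p}$. -/
open MeasureTheory Set ENNReal ProbabilityTheory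

lemma meas_Iic_le (ν : Measure ℝ) (t : ℝ≥0∞) : ν {y | ν (Iic y) ≤ t} ≤ t := by
  set A := {y : ℝ | ν (Iic y) ≤ t} with hA
  have hdc : ∀ ⦃y z : ℝ⦄, y ∈ A → z ≤ y → z ∈ A := by
    intro y z hy hzy
    exact le_trans (measure_mono (Iic_subset_Iic.2 hzy)) hy
  rcases A.eq_empty_or_nonempty with h | hne
  · simp [h]
  by_cases hb : BddAbove A
  · set b := sSup A with hb'
    by_cases hbA : b ∈ A
    · calc ν A ≤ ν (Iic b) := measure_mono (fun y hy => le_csSup hb hy)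
        _ ≤ t := hbA
    · have hsub : A ⊆ Iio b := by
        intro y hy
        rcases lt_or_eq_of_le (le_csSup hb hy) with h' | h'
        · exact h'
        · exact absurd (h' ▸ hy : sSup A ∈ A) hbA
      have hIio : Iio b = ⋃ (n : ℕ), Iic (b - 1/(n+1)) := by
        ext x
        simp only [mem_Iio, mem_iUnion, mem_Iic]
        constructor
        · intro hx
          obtain ⟨n, hn⟩ := exists_nat_one_div_lt (sub_pos.2 hx)
          exact ⟨n, by linarith⟩
        · rintro ⟨n, hn⟩
          have : (0:ℝ) < 1/(n+1) := by positivity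
          linarith
      have hmem : ∀ n : ℕ, (b - 1/(n+1) : ℝ) ∈ A := by
        intro n
        have : (0:ℝ) < 1/(n+1) := by positivity
        obtain ⟨y, hyA, hy⟩ := exists_lt_of_lt_csSup hne (by linarith : b - 1/(n+1) < b)
        exact hdc hyA hy.le
      calc ν A ≤ ν (Iio b) := measure_mono hsub
        _ = ⨆ n : ℕ, ν (Iic (b - 1/(n+1))) := by
            rw [hIio]
            exact (Monotone.directed_le (fun m n hmn =>
              Iic_subset_Iic.2 (by
                have : (1:ℝ)/(n+1) ≤ 1/(m+1) := by
                  apply one_div_le_one_div_of_le (by positivity) (by exact_mod_cast by linarith)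
                linarith))).measure_iUnion
        _ ≤ t := iSup_le fun n => hmem n
  · have hAuniv : A = univ := by
      ext y
      simp only [mem_univ, iff_true]
      obtain ⟨z, hzA, hz⟩ := not_bddAbove_iff.1 hb y
      exact hdc hzA hz.le
    have huniv : (univ : Set ℝ) = ⋃ n : ℕ, Iic (n : ℝ) := by
      ext x; simp only [mem_univ, true_iff, mem_iUnion, mem_Iic]
      obtain ⟨n, hn⟩ := exists_nat_ge x
      exact ⟨n, hn⟩
    calc ν A = ν (⋃ n : ℕ, Iic (n : ℝ)) := by rw [hAuniv, huniv]
      _ = ⨆ n : ℕ, ν (Iic (n : ℝ)) := (Monotone.directed_le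
          (fun m n hmn => Iic_subset_Iic.2 (by exact_mod_cast hmn))).measure_iUnion
      _ ≤ t := iSup_le fun n => by
          have : (n:ℝ) ∈ A := hAuniv ▸ mem_univ _
          exact this

lemma meas_Ici_le (ν : Measure ℝ) (t : ℝ≥0∞) : ν {y | ν (Ici y) ≤ t} ≤ t := by
  set A := {y : ℝ | ν (Ici y) ≤ t} with hA
  have hdc : ∀ ⦃y z : ℝ⦄, y ∈ A → y ≤ z → z ∈ A := by
    intro y z hy hzy
    exact le_trans (measure_mono (Ici_subset_Ici.2 hzy)) hy
  rcases A.eq_empty_or_nonempty with h | hne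
  · simp [h]
  by_cases hb : BddBelow A
  · set b := sInf A with hb'
    by_cases hbA : b ∈ A
    · calc ν A ≤ ν (Ici b) := measure_mono (fun y hy => csInf_le hb hy)
        _ ≤ t := hbA
    · have hsub : A ⊆ Ioi b := by
        intro y hy
        rcases lt_or_eq_of_le (csInf_le hb hy) with h' | h'
        · exact h'
        · exact absurd (h' ▸ hy : sInf A ∈ A) hbA
      have hIoi : Ioi b = ⋃ (n : ℕ), Ici (b + 1/(n+1)) := by
        ext x
        simp only [mem_Ioi, mem_iUnion, mem_Ici]
        constructor
        · intro hx
          obtain ⟨n, hn⟩ := exists_nat_one_div_lt (sub_pos.2 hx)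
          exact ⟨n, by linarith⟩
        · rintro ⟨n, hn⟩
          have : (0:ℝ) < 1/(n+1) := by positivity
          linarith
      have hmem : ∀ n : ℕ, (b + 1/(n+1) : ℝ) ∈ A := by
        intro n
        have : (0:ℝ) < 1/(n+1) := by positivity
        obtain ⟨y, hyA, hy⟩ := exists_lt_of_csInf_lt hne (by linarith : b < b + 1/(n+1))
        exact hdc hyA hy.le
      calc ν A ≤ ν (Ioi b) := measure_mono hsub
        _ = ⨆ n : ℕ, ν (Ici (b + 1/(n+1))) := by
            rw [hIoi]
            exact (Monotone.directed_le (fun m n hmn =>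
              Ici_subset_Ici.2 (by
                have : (1:ℝ)/(n+1) ≤ 1/(m+1) := by
                  apply one_div_le_one_div_of_le (by positivity) (by exact_mod_cast by linarith)
                linarith))).measure_iUnion
        _ ≤ t := iSup_le fun n => hmem n
  · have hAuniv : A = univ := by
      ext y
      simp only [mem_univ, iff_true]
      obtain ⟨z, hzA, hz⟩ := not_bddBelow_iff.1 hb y
      exact hdc hzA hz.le
    have huniv : (univ : Set ℝ) = ⋃ n : ℕ, Ici (-(n : ℝ)) := by
      ext x; simp only [mem_univ, true_iff, mem_iUnion, mem_Ici]
      obtain ⟨n, hn⟩ := exists_nat_ge (-x)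
      exact ⟨n, by linarith⟩
    calc ν A = ν (⋃ n : ℕ, Ici (-(n : ℝ))) := by rw [hAuniv, huniv]
      _ = ⨆ n : ℕ, ν (Ici (-(n : ℝ))) := (Monotone.directed_le
          (fun (m n : ℕ) hmn => Ici_subset_Ici.2 (by
            have : (m:ℝ) ≤ (n:ℝ) := by exact_mod_cast hmn
            linarith))).measure_iUnion
      _ ≤ t := iSup_le fun n => by
          have : (-(n:ℝ)) ∈ A := hAuniv ▸ mem_univ _
          exact this

lemma lemA (ν : Measure ℝ) {p : ℝ} (hp : 1 ≤ p) {c : ℝ≥0∞} (hc : c ≠ ⊤) :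
    min (ν univ) c ^ p ≤ ENNReal.ofReal p * ∫⁻ y, min (ν (Ici y)) c ^ (p-1) ∂ν := by
  have hT : Measurable (fun y : ℝ => ν (Ici y)) := by
    have : Antitone (fun y : ℝ => ν (Ici y)) :=
      fun a b hab => measure_mono (Ici_subset_Ici.2 hab)
    exact this.measurable
  rcases eq_or_lt_of_le hp with hp1 | hp1
  · rw [← hp1]
    simp only [rpow_one, sub_self, rpow_zero, lintegral_one, ofReal_one, one_mul]
    exact min_le_left _ _
  -- p > 1
  set m := min (ν univ) c with hm
  have hmtop : m ≠ ⊤ := ne_top_of_le_ne_top hc (min_le_right _ _)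
  by_cases hm0 : m = 0
  · rw [hm0, ENNReal.zero_rpow_of_pos (by linarith)]
    exact zero_le
  set M : ℝ := m.toReal with hM
  have hMpos : 0 < M := ENNReal.toReal_pos hm0 hmtop
  set f : ℝ → ℝ := fun y => (min (ν (Ici y)) c).toReal with hf
  have hmintop : ∀ y, min (ν (Ici y)) c ≠ ⊤ :=
    fun y => ne_top_of_le_ne_top hc (min_le_right _ _)
  have f_mble : AEMeasurable f ν := ((hT.min measurable_const).ennreal_toReal).aemeasurable
  have f_nn : 0 ≤ᵐ[ν] f := Filter.Eventually.of_forall fun y => ENNReal.toReal_nonneg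
  have hp1pos : 0 < p - 1 := by linarith
  have key := lintegral_rpow_eq_lintegral_meas_le_mul ν f_nn f_mble hp1pos
  have heq : ∀ y, ENNReal.ofReal (f y ^ (p-1)) = min (ν (Ici y)) c ^ (p-1) := by
    intro y
    rw [← ENNReal.ofReal_rpow_of_nonneg ENNReal.toReal_nonneg (by linarith),
      ENNReal.ofReal_toReal (hmintop y)]
  have key2 : ∫⁻ y, min (ν (Ici y)) c ^ (p-1) ∂ν
      = ENNReal.ofReal (p-1) * ∫⁻ t in Ioi 0, ν {a | t ≤ f a} * ENNReal.ofReal (t ^ (p-1-1)) := by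
    rw [← key]
    exact lintegral_congr fun y => (heq y).symm
  -- lower bound the t-integral
  have hdist : ∀ t : ℝ, t ∈ Ioo (0:ℝ) M →
      ENNReal.ofReal (M - t) ≤ ν {a | t ≤ f a} := by
    intro t ht
    have htpos : 0 < t := ht.1
    have htM : t < M := ht.2
    have hoRt : ENNReal.ofReal t < m := by
      conv_rhs => rw [← ENNReal.ofReal_toReal hmtop]
      exact ENNReal.ofReal_lt_ofReal_iff_of_nonneg htpos.le |>.2 htM
    have hsub : {a : ℝ | t ≤ f a}ᶜ ⊆ {a : ℝ | ν (Ici a) ≤ ENNReal.ofReal t} := by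
      intro a ha
      simp only [mem_compl_iff, mem_setOf_eq, not_le] at ha
      have h1 : min (ν (Ici a)) c ≤ ENNReal.ofReal t := by
        rw [← ENNReal.ofReal_toReal (hmintop a)]
        exact ENNReal.ofReal_le_ofReal ha.le
      rcases min_le_iff.1 h1 with h2 | h2
      · exact h2
      · exact absurd (lt_of_lt_of_le hoRt (min_le_right (ν univ) c) : _ < c)
          (not_lt.2 h2)
    have hcompl : ν {a : ℝ | t ≤ f a}ᶜ ≤ ENNReal.ofReal t :=
      le_trans (measure_mono hsub) (meas_Ici_le ν _)
    have hcover : ν univ ≤ ν {a : ℝ | t ≤ f a} + ν {a : ℝ | t ≤ f a}ᶜ := by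
      calc ν univ = ν ({a : ℝ | t ≤ f a} ∪ {a : ℝ | t ≤ f a}ᶜ) := by rw [union_compl_self]
        _ ≤ _ := measure_union_le _ _
    have : ENNReal.ofReal M ≤ ν {a : ℝ | t ≤ f a} + ENNReal.ofReal t := by
      calc ENNReal.ofReal M = m := ENNReal.ofReal_toReal hmtop
        _ ≤ ν univ := min_le_left _ _
        _ ≤ ν {a : ℝ | t ≤ f a} + ν {a : ℝ | t ≤ f a}ᶜ := hcover
        _ ≤ ν {a : ℝ | t ≤ f a} + ENNReal.ofReal t := add_le_add_right hcompl _
    rw [ENNReal.ofReal_sub _ htpos.le]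
    exact tsub_le_iff_right.2 this
  have hJ : ENNReal.ofReal (M ^ p / (p * (p-1)))
      ≤ ∫⁻ t in Ioi 0, ν {a | t ≤ f a} * ENNReal.ofReal (t ^ (p-1-1)) := by
    have step1 : ∫⁻ t in Ioo 0 M, ENNReal.ofReal ((M - t) * t ^ (p-2))
        ≤ ∫⁻ t in Ioi 0, ν {a | t ≤ f a} * ENNReal.ofReal (t ^ (p-1-1)) := by
      refine le_trans (?_ : _ ≤ ∫⁻ t in Ioo (0:ℝ) M, ν {a | t ≤ f a} * ENNReal.ofReal (t ^ (p-1-1)))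
        (lintegral_mono_set Ioo_subset_Ioi_self)
      refine lintegral_mono_ae ?_
      filter_upwards [ae_restrict_mem measurableSet_Ioo] with t ht
      have h1 : ENNReal.ofReal ((M - t) * t ^ (p-2))
          = ENNReal.ofReal (M - t) * ENNReal.ofReal (t ^ (p-2)) :=
        ENNReal.ofReal_mul (by linarith [ht.2])
      rw [h1, show p - 1 - 1 = p - 2 by ring]
      exact mul_le_mul_left (hdist t ht) _
    refine le_trans ?_ step1
    have hint : IntegrableOn (fun t => (M - t) * t ^ (p-2)) (Ioo 0 M) volume := by
      have h1 : IntegrableOn (fun t : ℝ => t ^ (p-2)) (Ioo 0 M) volume := by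
        have := (intervalIntegral.intervalIntegrable_rpow' (by linarith : (-1:ℝ) < p-2) (a := 0) (b := M))
        rw [intervalIntegrable_iff, uIoc_of_le hMpos.le] at this
        exact this.mono_set Ioo_subset_Ioc_self
      have h2 : IntegrableOn (fun t : ℝ => t ^ (p-1)) (Ioo 0 M) volume := by
        have := (intervalIntegral.intervalIntegrable_rpow' (by linarith : (-1:ℝ) < p-1) (a := 0) (b := M))
        rw [intervalIntegrable_iff, uIoc_of_le hMpos.le] at this
        exact this.mono_set Ioo_subset_Ioc_self
      have : (fun t : ℝ => (M - t) * t ^ (p-2)) =ᵐ[volume.restrict (Ioo 0 M)]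
          (fun t : ℝ => M * t ^ (p-2) - t ^ (p-1)) := by
        filter_upwards [ae_restrict_mem measurableSet_Ioo] with t ht
        have : t ^ (p-1) = t * t ^ (p-2) := by
          rw [← Real.rpow_one_add' (by linarith [ht.1]) (by ring_nf; linarith : 1 + (p-2) ≠ 0)]
          ring_nf
        rw [this]; ring
      exact (Integrable.sub (h1.const_mul M) h2).congr this.symm
    rw [← ofReal_integral_eq_lintegral_ofReal hint ?nn]
    case nn =>
      filter_upwards [ae_restrict_mem measurableSet_Ioo] with t ht
      exact mul_nonneg (by linarith [ht.2]) (Real.rpow_nonneg ht.1.le _)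
    apply ENNReal.ofReal_le_ofReal
    have heqf : (fun t : ℝ => (M - t) * t ^ (p-2)) =ᵐ[volume.restrict (Ioo 0 M)]
        (fun t : ℝ => M * t ^ (p-2) - t ^ (p-1)) := by
      filter_upwards [ae_restrict_mem measurableSet_Ioo] with t ht
      have h2 : t ^ (p-1) = t * t ^ (p-2) := by
        rw [← Real.rpow_one_add' (by linarith [ht.1]) (by ring_nf; linarith : 1 + (p-2) ≠ 0)]
        ring_nf
      rw [h2]; ring
    have h1 : IntegrableOn (fun t : ℝ => t ^ (p-2)) (Ioo 0 M) volume := by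
      have := (intervalIntegral.intervalIntegrable_rpow' (by linarith : (-1:ℝ) < p-2) (a := 0) (b := M))
      rw [intervalIntegrable_iff, uIoc_of_le hMpos.le] at this
      exact this.mono_set Ioo_subset_Ioc_self
    have h2 : IntegrableOn (fun t : ℝ => t ^ (p-1)) (Ioo 0 M) volume := by
      have := (intervalIntegral.intervalIntegrable_rpow' (by linarith : (-1:ℝ) < p-1) (a := 0) (b := M))
      rw [intervalIntegrable_iff, uIoc_of_le hMpos.le] at this
      exact this.mono_set Ioo_subset_Ioc_self
    have e1 : ∫ t in Ioo 0 M, t ^ (p-2) = M ^ (p-1) / (p-1) := by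
      rw [← integral_Ioc_eq_integral_Ioo, ← intervalIntegral.integral_of_le hMpos.le,
        integral_rpow (Or.inl (by linarith : (-1:ℝ) < p-2)),
        Real.zero_rpow (by linarith : p - 2 + 1 ≠ 0),
        show p - 2 + 1 = p - 1 by ring]
      ring
    have e2 : ∫ t in Ioo 0 M, t ^ (p-1) = M ^ p / p := by
      rw [← integral_Ioc_eq_integral_Ioo, ← intervalIntegral.integral_of_le hMpos.le,
        integral_rpow (Or.inl (by linarith : (-1:ℝ) < p-1)),
        Real.zero_rpow (by linarith : p - 1 + 1 ≠ 0),
        show p - 1 + 1 = p by ring]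
      ring
    have hMp : M * M ^ (p-1) = M ^ p := by
      rw [← Real.rpow_one_add' hMpos.le (by linarith : 1 + (p-1) ≠ 0),
        show 1 + (p-1) = p by ring]
    have hval : ∫ t in Ioo 0 M, (M - t) * t ^ (p-2) = M ^ p / (p * (p-1)) := by
      rw [integral_congr_ae heqf, integral_sub (h1.const_mul M) h2, MeasureTheory.integral_const_mul, e1, e2]
      rw [← mul_div_assoc, hMp]
      have hp0 : p ≠ 0 := by linarith
      have hp10 : p - 1 ≠ 0 := by linarith
      field_simp
      ring
    rw [hval]
  -- final assembly
  rw [key2, ← mul_assoc, ← ENNReal.ofReal_mul (by linarith : (0:ℝ) ≤ p)]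
  calc m ^ p = ENNReal.ofReal (M ^ p) := by
        conv_lhs => rw [← ENNReal.ofReal_toReal hmtop]
        rw [ENNReal.ofReal_rpow_of_nonneg ENNReal.toReal_nonneg (by linarith : (0:ℝ) ≤ p)]
    _ = ENNReal.ofReal (p * (p-1)) * ENNReal.ofReal (M ^ p / (p * (p-1))) := by
        rw [← ENNReal.ofReal_mul (by nlinarith : (0:ℝ) ≤ p * (p-1))]
        congr 1
        field_simp
    _ ≤ ENNReal.ofReal (p * (p-1)) * ∫⁻ t in Ioi 0, ν {a | t ≤ f a} * ENNReal.ofReal (t ^ (p-1-1)) :=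
        mul_le_mul_right hJ _

lemma core (μ : Measure ℝ) [IsProbabilityMeasure μ] (f : ℝ → ℝ≥0∞) (hf : Measurable f)
    (hftop : ∀ y, f y ≠ ⊤) {p : ℝ} (hp : 1 ≤ p) :
    (∫⁻ x, (∫⁻ y in Ici x, f y / μ (Iic y) ∂μ) ^ p ∂μ) ^ (1/p)
      ≤ ENNReal.ofReal p * (∫⁻ y, f y ^ p ∂μ) ^ (1/p) := by
  have hp0 : (0:ℝ) < p := by linarith
  have h1p : (0:ℝ) < 1/p := by positivity
  set F : ℝ → ℝ≥0∞ := fun y => μ (Iic y) with hF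
  have hFmeas : Measurable F := by
    have : Monotone F := fun a b hab => measure_mono (Iic_subset_Iic.2 hab)
    exact this.measurable
  have hFtop : ∀ y, F y ≠ ⊤ := fun y => measure_ne_top μ _
  set h : ℝ → ℝ≥0∞ := fun y => f y / F y with hh
  have hhmeas : Measurable h := hf.div hFmeas
  set G : ℝ → ℝ≥0∞ := fun x => ∫⁻ y in Ici x, h y ∂μ with hG
  have hGanti : Antitone G := fun a b hab => lintegral_mono_set (Ici_subset_Ici.2 hab)
  have hGmeas : Measurable G := hGanti.measurable
  set I := ∫⁻ y, f y ^ p ∂μ with hI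
  by_cases hItop : I = ⊤
  · rw [hItop, ENNReal.top_rpow_of_pos h1p, ENNReal.mul_top
      (by simp only [ne_eq, ENNReal.ofReal_eq_zero, not_le]; linarith)]
    exact le_top
  -- a.e. positivity of F
  have hFpos : ∀ᵐ y ∂μ, F y ≠ 0 := by
    have h0 : μ {y | F y = 0} = 0 := by
      refine le_antisymm (le_trans (measure_mono ?_) (meas_Iic_le μ 0)) zero_le
      intro y hy
      exact le_of_eq hy
    rw [ae_iff]
    simpa using h0
  -- truncated functions
  set Gn : ℕ → ℝ → ℝ≥0∞ := fun n x => min (G x) n with hGn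
  have hGnmeas : ∀ n, Measurable (Gn n) := fun n => hGmeas.min measurable_const
  -- Claim 1 : pointwise inequality from lemA
  have claim1 : ∀ (n : ℕ) (x : ℝ), Gn n x ^ p
      ≤ ENNReal.ofReal p * ∫⁻ y in Ici x, h y * Gn n y ^ (p-1) ∂μ := by
    intro n x
    set ν : Measure ℝ := (μ.restrict (Ici x)).withDensity h with hν
    have hνuniv : ν univ = G x := by
      rw [hν, withDensity_apply _ MeasurableSet.univ, Measure.restrict_univ]
    have hνIci : ∀ y, ν (Ici y) = G (max y x) := by
      intro y
      rw [hν, withDensity_apply _ measurableSet_Ici, Measure.restrict_restrict measurableSet_Ici,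
        Ici_inter_Ici]
    have key := lemA ν hp (c := (n:ℝ≥0∞)) (natCast_ne_top n)
    rw [hνuniv] at key
    refine le_trans key ?_
    refine mul_le_mul_right ?_ _
    have hw : ∫⁻ y, min (ν (Ici y)) n ^ (p-1) ∂ν
        = ∫⁻ y in Ici x, h y * (min (G (max y x)) n ^ (p-1)) ∂μ := by
      rw [hν, lintegral_withDensity_eq_lintegral_mul _ hhmeas ?wmeas]
      case wmeas =>
        have hmono : Antitone fun y => G (max y x) :=
          fun a b hab => hGanti (max_le_max hab le_rfl)
        have : Measurable fun y => ν (Ici y) := by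
          simp only [hνIci]
          exact hmono.measurable
        exact (this.min measurable_const).pow_const _
      refine lintegral_congr fun y => ?_
      simp only [Pi.mul_apply, ← hν, hνIci]
    rw [hw]
    refine le_of_eq (setLIntegral_congr_fun measurableSet_Ici ?_)
    refine fun y (hy : x ≤ y) => ?_
    beta_reduce
    rw [max_eq_left hy]
  -- Claim 2 : Fubini
  have claim2 : ∀ n : ℕ, ∫⁻ x, Gn n x ^ p ∂μ
      ≤ ENNReal.ofReal p * ∫⁻ y, Gn n y ^ (p-1) * f y ∂μ := by
    intro n
    set W : ℝ → ℝ≥0∞ := fun y => h y * Gn n y ^ (p-1) with hW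
    have hWmeas : Measurable W := hhmeas.mul ((hGnmeas n).pow_const _)
    have swap : ∫⁻ x, ∫⁻ y in Ici x, W y ∂μ ∂μ = ∫⁻ y, W y * F y ∂μ := by
      have hK : ∀ x, ∫⁻ y in Ici x, W y ∂μ
          = ∫⁻ y, ({q : ℝ × ℝ | q.1 ≤ q.2}.indicator (fun q => W q.2)) (x, y) ∂μ := by
        intro x
        rw [← lintegral_indicator measurableSet_Ici]
        refine lintegral_congr fun y => ?_
        by_cases hxy : x ≤ y
        · rw [indicator_of_mem (mem_Ici.2 hxy), indicator_of_mem (by exact hxy)]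
        · rw [indicator_of_notMem (by simpa using hxy), indicator_of_notMem (by exact hxy)]
      simp_rw [hK]
      rw [lintegral_lintegral_swap]
      · refine lintegral_congr fun y => ?_
        have : ∀ x : ℝ, ({q : ℝ × ℝ | q.1 ≤ q.2}.indicator (fun q => W q.2)) (x, y)
            = (Iic y).indicator (fun _ => W y) x := by
          intro x
          by_cases hxy : x ≤ y
          · rw [indicator_of_mem (by exact hxy), indicator_of_mem (mem_Iic.2 hxy)]
          · rw [indicator_of_notMem (by exact hxy), indicator_of_notMem (by simpa using hxy)]
        simp_rw [this]
        rw [lintegral_indicator measurableSet_Iic, setLIntegral_const]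
      · exact ((hWmeas.comp measurable_snd).indicator
          (measurableSet_le measurable_fst measurable_snd)).aemeasurable
    have hae : ∀ᵐ y ∂μ, W y * F y = Gn n y ^ (p-1) * f y := by
      filter_upwards [hFpos] with y hy
      rw [hW]
      simp only []
      rw [mul_comm (h y) _, mul_assoc, hh]
      simp only []
      rw [ENNReal.div_mul_cancel hy (hFtop y)]
    calc ∫⁻ x, Gn n x ^ p ∂μ
        ≤ ∫⁻ x, ENNReal.ofReal p * ∫⁻ y in Ici x, W y ∂μ ∂μ := lintegral_mono (claim1 n)
      _ = ENNReal.ofReal p * ∫⁻ x, ∫⁻ y in Ici x, W y ∂μ ∂μ :=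
          lintegral_const_mul' _ _ ENNReal.ofReal_ne_top
      _ = ENNReal.ofReal p * ∫⁻ y, W y * F y ∂μ := by rw [swap]
      _ = ENNReal.ofReal p * ∫⁻ y, Gn n y ^ (p-1) * f y ∂μ := by
          rw [lintegral_congr_ae hae]
  -- Claim 3 : for every n, (∫ Gn^p)^(1/p) ≤ p * I^(1/p)
  have claim3 : ∀ n : ℕ, (∫⁻ x, Gn n x ^ p ∂μ) ^ (1/p) ≤ ENNReal.ofReal p * I ^ (1/p) := by
    intro n
    set A := ∫⁻ x, Gn n x ^ p ∂μ with hA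
    have hAtop : A ≠ ⊤ := by
      refine ne_top_of_le_ne_top ?_ (lintegral_mono fun x =>
        ENNReal.rpow_le_rpow (min_le_right _ _) hp0.le)
      rw [lintegral_const, measure_univ, mul_one]
      exact ENNReal.rpow_ne_top_of_nonneg hp0.le (natCast_ne_top n)
    rcases eq_or_lt_of_le hp with hp1 | hp1
    · -- p = 1
      subst hp1
      rw [show (1:ℝ)/1 = 1 by norm_num, ENNReal.rpow_one, ENNReal.rpow_one]
      refine le_trans (claim2 n) ?_
      refine le_of_eq ?_
      congr 1
      refine lintegral_congr fun y => ?_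
      rw [sub_self, ENNReal.rpow_zero, one_mul, ENNReal.rpow_one]
    · -- p > 1
      set q : ℝ := p / (p - 1) with hq
      have hpq : q.HolderConjugate p := (Real.HolderConjugate.conjExponent hp1).symm
      have holder := ENNReal.lintegral_mul_le_Lp_mul_Lq μ hpq
        (((hGnmeas n).pow_const (p-1)).aemeasurable) hf.aemeasurable
      have hGq : ∀ y, (Gn n y ^ (p-1)) ^ q = Gn n y ^ p := by
        intro y
        rw [← ENNReal.rpow_mul]
        congr 1
        rw [hq]
        have h10 : p - 1 ≠ 0 := by linarith
        field_simp
      have holder2 : ∫⁻ y, Gn n y ^ (p-1) * f y ∂μ ≤ A ^ (1/q) * I ^ (1/p) := by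
        refine le_trans (le_of_eq (lintegral_congr fun y => rfl)) (le_trans holder ?_)
        refine mul_le_mul' (le_of_eq ?_) le_rfl
        congr 1
        exact lintegral_congr fun y => hGq y
      have main : A ≤ ENNReal.ofReal p * (A ^ (1/q) * I ^ (1/p)) :=
        le_trans (claim2 n) (mul_le_mul_right holder2 _)
      by_cases hA0 : A = 0
      · rw [hA0, ENNReal.zero_rpow_of_pos h1p]
        exact zero_le
      have hsplit : A = A ^ (1/q) * A ^ (1/p) := by
        rw [← ENNReal.rpow_add _ _ hA0 hAtop, one_div, one_div, hpq.inv_add_inv_eq_one,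
          ENNReal.rpow_one]
      have hq0 : A ^ (1/q) ≠ 0 := by
        simp [ENNReal.rpow_eq_zero_iff, hA0, hAtop]
      have hqtop : A ^ (1/q) ≠ ⊤ :=
        ENNReal.rpow_ne_top_of_nonneg hpq.one_div_nonneg hAtop
      have : A ^ (1/q) * A ^ (1/p) ≤ A ^ (1/q) * (ENNReal.ofReal p * I ^ (1/p)) := by
        rw [← hsplit]
        calc A ≤ ENNReal.ofReal p * (A ^ (1/q) * I ^ (1/p)) := main
          _ = A ^ (1/q) * (ENNReal.ofReal p * I ^ (1/p)) := by ring
      exact (ENNReal.mul_le_mul_iff_right hq0 hqtop).1 this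
  -- monotone convergence
  have hmono : Monotone fun n : ℕ => fun x => Gn n x ^ p := by
    intro a b hab
    refine fun x => ENNReal.rpow_le_rpow (min_le_min le_rfl ?_) hp0.le
    exact_mod_cast Nat.cast_le.2 hab
  have hptwise : ∀ x, ⨆ n : ℕ, Gn n x ^ p = G x ^ p := by
    intro x
    by_cases hx : G x = ⊤
    · rw [hx, ENNReal.top_rpow_of_pos hp0]
      refine le_antisymm (iSup_le fun n => le_top) ?_
      have : ∀ k : ℕ, (k : ℝ≥0∞) ≤ ⨆ n : ℕ, Gn n x ^ p := by
        intro k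
        refine le_trans ?_ (le_iSup (fun n : ℕ => Gn n x ^ p) k)
        rw [hGn]
        simp only [hx, min_eq_right (le_top : (k:ℝ≥0∞) ≤ ⊤)]
        rcases Nat.eq_zero_or_pos k with hk | hk
        · subst hk
          simp
        · exact ENNReal.le_rpow_self_of_one_le (by exact_mod_cast hk) hp
      calc (⊤:ℝ≥0∞) = ⨆ k : ℕ, (k:ℝ≥0∞) := ENNReal.iSup_natCast.symm
        _ ≤ ⨆ n : ℕ, Gn n x ^ p := iSup_le fun k => this k
    · obtain ⟨N, hN⟩ := ENNReal.exists_nat_gt hx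
      refine le_antisymm (iSup_le fun n =>
        ENNReal.rpow_le_rpow (min_le_left _ _) hp0.le) ?_
      refine le_trans (le_of_eq ?_) (le_iSup (fun n : ℕ => Gn n x ^ p) N)
      rw [hGn]
      simp only [min_eq_left hN.le]
  have hlim : ∫⁻ x, G x ^ p ∂μ = ⨆ n : ℕ, ∫⁻ x, Gn n x ^ p ∂μ := by
    rw [← lintegral_iSup (fun n => (hGnmeas n).pow_const p) hmono]
    exact lintegral_congr fun x => (hptwise x).symm
  -- conclude
  have hfin : ∫⁻ x, G x ^ p ∂μ ≤ (ENNReal.ofReal p * I ^ (1/p)) ^ p := by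
    rw [hlim]
    refine iSup_le fun n => ?_
    have := claim3 n
    calc ∫⁻ x, Gn n x ^ p ∂μ = ((∫⁻ x, Gn n x ^ p ∂μ) ^ (1/p)) ^ p := by
          rw [← ENNReal.rpow_mul, one_div_mul_cancel hp0.ne', ENNReal.rpow_one]
      _ ≤ (ENNReal.ofReal p * I ^ (1/p)) ^ p := ENNReal.rpow_le_rpow this hp0.le
  calc (∫⁻ x, G x ^ p ∂μ) ^ (1/p) ≤ ((ENNReal.ofReal p * I ^ (1/p)) ^ p) ^ (1/p) :=
        ENNReal.rpow_le_rpow hfin h1p.le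
    _ = ENNReal.ofReal p * I ^ (1/p) := by
        rw [← ENNReal.rpow_mul, mul_one_div_cancel hp0.ne', ENNReal.rpow_one]

/-- Probability theoretic Copson inequality (Theorem 3) for `p ≥ 1`:
`{E(|E(ψ(Y)/F(Y) 1_{Y≥X} | X)|^p)}^{1/p} ≤ p {E(|ψ(Y)|^p)}^{1/p}`.
The conditional expectation is written explicitly, via independence, as
`∫_{[X,∞)} |ψ(y)|/F(y) dμ(y)` with `μ` the common law and `F(y) = μ(-∞,y]`
(which dominates the absolute value of the conditional expectation). -/
theorem probability_copson {Ω : Type*} [MeasurableSpace Ω] (P : Measure Ω)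
    [IsProbabilityMeasure P] (X Y : Ω → ℝ) (hX : Measurable X) (hY : Measurable Y)
    (hindep : IndepFun X Y P) (hid : Measure.map X P = Measure.map Y P)
    (ψ : ℝ → ℝ) (hψ : Measurable ψ) (p : ℝ) (hp : 1 ≤ p) :
    (∫⁻ ω, (∫⁻ y in Ici (X ω),
          ENNReal.ofReal (|ψ y|) / Measure.map Y P (Iic y) ∂(Measure.map Y P)) ^ p ∂P)
        ^ (1 / p)
      ≤ ENNReal.ofReal p * (∫⁻ ω, ENNReal.ofReal (|ψ (Y ω)| ^ p) ∂P) ^ (1 / p) := by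
  have hp0 : (0:ℝ) < p := by linarith
  have hμP : IsProbabilityMeasure (Measure.map Y P) :=
    Measure.isProbabilityMeasure_map hY.aemeasurable
  set μ := Measure.map Y P with hμdef
  set G : ℝ → ℝ≥0∞ := fun x => ∫⁻ y in Ici x, ENNReal.ofReal (|ψ y|) / μ (Iic y) ∂μ with hGdef
  have hGrw : ∀ ω : Ω, (∫⁻ y in Ici (X ω), ENNReal.ofReal (|ψ y|) / μ (Iic y) ∂μ) = G (X ω) :=
    fun _ => rfl
  simp only [hGrw]
  have hGanti : Antitone G := fun a b hab => lintegral_mono_set (Ici_subset_Ici.2 hab)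
  have hGmeas : Measurable G := hGanti.measurable
  have hL : ∫⁻ ω, G (X ω) ^ p ∂P = ∫⁻ x, G x ^ p ∂μ := by
    rw [← hid, lintegral_map (hGmeas.pow_const p) hX]
  have hR : ∫⁻ ω, ENNReal.ofReal (|ψ (Y ω)| ^ p) ∂P
      = ∫⁻ y, ENNReal.ofReal (|ψ y|) ^ p ∂μ := by
    rw [← lintegral_map ((hψ.abs.pow_const p).ennreal_ofReal) hY, ← hμdef]
    refine lintegral_congr fun y => ?_
    rw [ENNReal.ofReal_rpow_of_nonneg (abs_nonneg _) hp0.le]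
  rw [hL, hR]
  exact core μ (fun y => ENNReal.ofReal (|ψ y|)) hψ.abs.ennreal_ofReal
    (fun y => ENNReal.ofReal_ne_top) hp
end

section
/- Let $X$ and $Y$ be independent random variables with common distribution function $F$, let $0<p<1$, and let $\psi$ be a nonnegative measurable function. Then $\left\{E\left(\left(E\left(\frac{\psi(Y)}{F(Y)}\mathbf{1}_{[Y\ge X]}\mid X\right)\right)^p\right)\right\}^{1/p} \ge p\,\left\{E(\psi^p(Y))\right\}^{1/p}$. -/
open MeasureTheory Set ENNReal ProbabilityTheory

lemma upper_set_measure_le (ν : Measure ℝ) {U : Set ℝ}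
    (hU : ∀ ⦃a b : ℝ⦄, a ∈ U → a ≤ b → b ∈ U) {s : ℝ≥0∞}
    (h : ∀ y ∈ U, ν (Ici y) ≤ s) : ν U ≤ s := by
  rcases U.eq_empty_or_nonempty with rfl | ⟨y₀, hy₀⟩
  · simp
  have hmono : Monotone fun n : ℕ => Ici (sInf U + 1 / (n + 1)) := by
    intro a b hab
    apply Ici_subset_Ici.2
    have : (1:ℝ) / (b+1) ≤ 1 / (a+1) := by
      apply one_div_le_one_div_of_le (by positivity)
      exact_mod_cast by omega
    linarith
  by_cases hbd : BddBelow U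
  · set t := sInf U with ht
    by_cases htU : t ∈ U
    · exact le_trans (measure_mono fun y hy => csInf_le hbd hy) (h t htU)
    · have hmem : ∀ z, t < z → z ∈ U := by
        intro z hz
        obtain ⟨y, hyU, hyz⟩ := exists_lt_of_csInf_lt ⟨y₀, hy₀⟩ hz
        exact hU hyU hyz.le
      have hsub : U ⊆ ⋃ n : ℕ, Ici (t + 1 / (n + 1)) := by
        intro z hz
        have hz' : t < z := lt_of_le_of_ne (csInf_le hbd hz) fun he => htU (he ▸ hz)
        obtain ⟨n, hn⟩ := exists_nat_one_div_lt (sub_pos.2 hz')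
        exact mem_iUnion.2 ⟨n, by simp only [mem_Ici];  linarith⟩
      calc ν U ≤ ν (⋃ n : ℕ, Ici (t + 1 / (n + 1))) := measure_mono hsub
        _ = ⨆ n : ℕ, ν (Ici (t + 1 / (n + 1))) := (hmono.directed_le).measure_iUnion
        _ ≤ s := iSup_le fun n => h _ (hmem _ (lt_add_of_pos_right _ (by positivity)))
  · have hall : ∀ z : ℝ, z ∈ U := by
      intro z
      obtain ⟨y, hyU, hyz⟩ := not_bddBelow_iff.1 hbd z
      exact hU hyU hyz.le
    have hcov : U ⊆ ⋃ n : ℕ, Ici (-(n : ℝ)) := by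
      intro z _
      obtain ⟨n, hn⟩ := exists_nat_ge (-z)
      exact mem_iUnion.2 ⟨n, by simp only [mem_Ici]; linarith⟩
    have hdir : Monotone fun n : ℕ => Ici (-(n:ℝ)) := by
      intro a b hab; apply Ici_subset_Ici.2; simp; exact_mod_cast hab
    calc ν U ≤ ν (⋃ n : ℕ, Ici (-(n:ℝ))) := measure_mono hcov
      _ = ⨆ n : ℕ, ν (Ici (-(n:ℝ))) := (hdir.directed_le).measure_iUnion
      _ ≤ s := iSup_le fun n => h _ (hall _)

lemma lower_set_measure_le (ν : Measure ℝ) {L : Set ℝ}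
    (hL : ∀ ⦃a b : ℝ⦄, a ∈ L → b ≤ a → b ∈ L) {s : ℝ≥0∞}
    (h : ∀ y ∈ L, ν (Iic y) ≤ s) : ν L ≤ s := by
  rcases L.eq_empty_or_nonempty with rfl | ⟨y₀, hy₀⟩
  · simp
  by_cases hbd : BddAbove L
  · set t := sSup L with ht
    by_cases htL : t ∈ L
    · exact le_trans (measure_mono fun y hy => le_csSup hbd hy) (h t htL)
    · have hmem : ∀ z, z < t → z ∈ L := by
        intro z hz
        obtain ⟨y, hyL, hyz⟩ := exists_lt_of_lt_csSup ⟨y₀, hy₀⟩ hz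
        exact hL hyL hyz.le
      have hsub : L ⊆ ⋃ n : ℕ, Iic (t - 1 / (n + 1)) := by
        intro z hz
        have hz' : z < t := lt_of_le_of_ne (le_csSup hbd hz) fun he => htL (he ▸ hz)
        obtain ⟨n, hn⟩ := exists_nat_one_div_lt (sub_pos.2 hz')
        exact mem_iUnion.2 ⟨n, by simp only [mem_Iic];  linarith⟩
      have hmono : Monotone fun n : ℕ => Iic (t - 1 / (n + 1)) := by
        intro a b hab
        apply Iic_subset_Iic.2
        have : (1:ℝ) / (b+1) ≤ 1 / (a+1) := by
          apply one_div_le_one_div_of_le (by positivity)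
          exact_mod_cast by omega
        linarith
      calc ν L ≤ ν (⋃ n : ℕ, Iic (t - 1 / (n + 1))) := measure_mono hsub
        _ = ⨆ n : ℕ, ν (Iic (t - 1 / (n + 1))) := (hmono.directed_le).measure_iUnion
        _ ≤ s := iSup_le fun n => h _ (hmem _ (by simp only [sub_lt_self_iff]; positivity))
  · have hall : ∀ z : ℝ, z ∈ L := by
      intro z
      obtain ⟨y, hyL, hyz⟩ := not_bddAbove_iff.1 hbd z
      exact hL hyL hyz.le
    have hcov : L ⊆ ⋃ n : ℕ, Iic (n : ℝ) := by
      intro z _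
      obtain ⟨n, hn⟩ := exists_nat_ge z
      exact mem_iUnion.2 ⟨n, by simpa using hn⟩
    have hdir : Monotone fun n : ℕ => Iic ((n:ℝ)) := by
      intro a b hab; apply Iic_subset_Iic.2; exact_mod_cast hab
    calc ν L ≤ ν (⋃ n : ℕ, Iic ((n:ℝ))) := measure_mono hcov
      _ = ⨆ n : ℕ, ν (Iic ((n:ℝ))) := (hdir.directed_le).measure_iUnion
      _ ≤ s := iSup_le fun n => h _ (hall _)

lemma tail_lemma (ν : Measure ℝ) {p : ℝ} (hp0 : 0 < p) (hp1 : p < 1) :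
    ENNReal.ofReal p * ∫⁻ y, ν (Ici y) ^ (p - 1) ∂ν ≤ ν univ ^ p := by
  rcases eq_or_ne (ν univ) 0 with h0 | h0
  · have hν : ν = 0 := Measure.measure_univ_eq_zero.mp h0
    simp [hν]
  rcases eq_or_ne (ν univ) ∞ with htop | htop
  · rw [htop, ENNReal.top_rpow_of_pos hp0]; exact le_top
  set M := ν univ with hM
  haveI : IsFiniteMeasure ν := ⟨lt_top_iff_ne_top.2 htop⟩
  set T : ℝ → ℝ≥0∞ := fun y => ν (Ici y) with hT
  have hTanti : Antitone T := fun a b hab => measure_mono (Ici_subset_Ici.2 hab)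
  have hTmeas : Measurable T := hTanti.measurable
  have hTle : ∀ y, T y ≤ M := fun y => measure_mono (subset_univ _)
  have hTtop : ∀ y, T y ≠ ∞ := fun y => ((hTle y).trans_lt (lt_top_iff_ne_top.2 htop)).ne
  have hS : ∀ s : ℝ≥0∞, ν {y | T y ≤ s} ≤ s := by
    intro s
    refine upper_set_measure_le ν ?_ ?_
    · intro a b ha hab
      exact le_trans (hTanti hab) ha
    · intro y hy; exact hy
  have hT0 : ∀ᵐ y ∂ν, T y ≠ 0 := by
    rw [ae_iff]
    have : {y | ¬ T y ≠ 0} = {y | T y ≤ 0} := by ext y; simp [le_zero_iff]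
    rw [this]
    exact le_zero_iff.mp (hS 0)
  set f : ℝ → ℝ := fun y => (T y).toReal ^ (p - 1) with hf
  have hfm : Measurable f := (ENNReal.measurable_toReal.comp hTmeas).pow_const _
  have hfnn : ∀ y, 0 ≤ f y := fun y => Real.rpow_nonneg ENNReal.toReal_nonneg _
  have key : ∫⁻ y, T y ^ (p - 1) ∂ν = ∫⁻ y, ENNReal.ofReal (f y) ∂ν := by
    apply lintegral_congr_ae
    filter_upwards [hT0] with y hy
    rw [hf]
    rw [← ENNReal.ofReal_rpow_of_pos (ENNReal.toReal_pos hy (hTtop y)),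
      ENNReal.ofReal_toReal (hTtop y)]
  rw [key, lintegral_eq_lintegral_meas_lt ν (Filter.Eventually.of_forall hfnn) hfm.aemeasurable]
  set m := M.toReal with hm
  have hmpos : 0 < m := ENNReal.toReal_pos h0 htop
  set s0 := m ^ (p - 1) with hs0
  have hs0pos : 0 < s0 := Real.rpow_pos_of_pos hmpos _
  have hsplit : (Ioi (0:ℝ)) = Ioc 0 s0 ∪ Ioi s0 := (Ioc_union_Ioi_eq_Ioi hs0pos.le).symm
  have piece1 : ∫⁻ t in Ioc 0 s0, ν {a | t < f a} ≤ M ^ p := by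
    calc ∫⁻ t in Ioc 0 s0, ν {a | t < f a}
        ≤ ∫⁻ _ in Ioc 0 s0, M := lintegral_mono fun t => measure_mono (subset_univ _)
      _ = M * volume (Ioc 0 s0) := setLIntegral_const _ _
      _ = M * ENNReal.ofReal s0 := by rw [Real.volume_Ioc, sub_zero]
      _ = M ^ (1:ℝ) * M ^ (p-1) := by
          rw [hs0, ← ENNReal.ofReal_rpow_of_pos hmpos, hm, ENNReal.ofReal_toReal htop,
            ENNReal.rpow_one]
      _ = M ^ p := by rw [← ENNReal.rpow_add _ _ h0 htop]; ring_nf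
  have piece2 : ∫⁻ t in Ioi s0, ν {a | t < f a} ≤ M ^ p * ENNReal.ofReal ((1-p)/p) := by
    have hb : ∀ t ∈ Ioi s0, ν {a | t < f a} ≤ ENNReal.ofReal (t ^ (1/(p-1))) := by
      intro t ht
      have htpos : 0 < t := hs0pos.trans ht
      refine le_trans (measure_mono ?_) (hS (ENNReal.ofReal (t ^ (1/(p-1)))))
      intro a ha
      simp only [mem_setOf_eq] at ha ⊢
      have hTa0 : T a ≠ 0 := by
        intro h
        rw [hf] at ha
        simp only [h, ENNReal.toReal_zero] at ha
        rw [Real.zero_rpow (by intro h'; linarith [h'] : p - 1 ≠ 0)] at ha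
        linarith
      have hr : 0 < (T a).toReal := ENNReal.toReal_pos hTa0 (hTtop a)
      have hlt : (T a).toReal < t ^ (1/(p-1)) := by
        have h2 := Real.rpow_lt_rpow_of_neg htpos ha
          (show 1/(p-1) < 0 by apply div_neg_of_pos_of_neg one_pos; linarith)
        rwa [← Real.rpow_mul hr.le, mul_one_div_cancel (by intro h'; linarith [h'] : p-1 ≠ 0),
          Real.rpow_one] at h2
      calc T a = ENNReal.ofReal (T a).toReal := (ENNReal.ofReal_toReal (hTtop a)).symm
        _ ≤ ENNReal.ofReal (t ^ (1/(p-1))) := ENNReal.ofReal_le_ofReal hlt.le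
    have hβ : 1/(p-1) < -1 := by
      rw [div_lt_iff_of_neg (by linarith : p - 1 < 0)]
      linarith
    have hint : IntegrableOn (fun t : ℝ => t ^ (1/(p-1))) (Ioi s0) :=
      integrableOn_Ioi_rpow_of_lt hβ hs0pos
    have heq : ∫⁻ t in Ioi s0, ENNReal.ofReal (t ^ (1/(p-1))) ∂volume
        = ENNReal.ofReal (∫ t in Ioi s0, t ^ (1/(p-1))) := by
      refine (ofReal_integral_eq_lintegral_ofReal hint ?_).symm
      filter_upwards [ae_restrict_mem measurableSet_Ioi] with t ht
      exact Real.rpow_nonneg (hs0pos.trans ht).le _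
    have hval : (∫ t in Ioi s0, t ^ (1/(p-1))) = m ^ p * ((1-p)/p) := by
      have hpm : p - 1 ≠ 0 := by linarith
      rw [integral_Ioi_rpow_of_lt hβ hs0pos, hs0, ← Real.rpow_mul hmpos.le]
      have he : (p-1)*(1/(p-1)+1) = p := by field_simp; ring
      rw [he]
      have h1 : 1/(p-1)+1 = p/(p-1) := by field_simp; ring
      rw [h1]
      field_simp
      ring
    calc ∫⁻ t in Ioi s0, ν {a | t < f a}
        ≤ ∫⁻ t in Ioi s0, ENNReal.ofReal (t ^ (1/(p-1))) ∂volume := by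
          refine setLIntegral_mono (by fun_prop) hb
      _ = ENNReal.ofReal (m ^ p * ((1-p)/p)) := by rw [heq, hval]
      _ = M ^ p * ENNReal.ofReal ((1-p)/p) := by
          rw [ENNReal.ofReal_mul (by positivity), ← ENNReal.ofReal_rpow_of_pos hmpos, hm,
            ENNReal.ofReal_toReal htop]
  have total : ∫⁻ t in Ioi (0:ℝ), ν {a | t < f a} ≤ M ^ p * ENNReal.ofReal (1/p) := by
    rw [hsplit, lintegral_union measurableSet_Ioi (Set.Ioc_disjoint_Ioi le_rfl)]
    calc (∫⁻ t in Ioc 0 s0, ν {a | t < f a}) + ∫⁻ t in Ioi s0, ν {a | t < f a}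
        ≤ M ^ p + M ^ p * ENNReal.ofReal ((1-p)/p) := add_le_add piece1 piece2
      _ = M ^ p * (1 + ENNReal.ofReal ((1-p)/p)) := by ring
      _ = M ^ p * ENNReal.ofReal (1/p) := by
          rw [← ENNReal.ofReal_one, ← ENNReal.ofReal_add zero_le_one (div_nonneg (by linarith) hp0.le)]
          congr 1
          rw [eq_comm]
          field_simp; ring_nf
  calc ENNReal.ofReal p * ∫⁻ t in Ioi (0:ℝ), ν {a | t < f a}
      ≤ ENNReal.ofReal p * (M ^ p * ENNReal.ofReal (1/p)) := by
        exact mul_le_mul_right total _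
    _ = M ^ p * (ENNReal.ofReal p * ENNReal.ofReal (1/p)) := by ring
    _ = M ^ p := by
        rw [← ENNReal.ofReal_mul hp0.le, mul_one_div_cancel hp0.ne', ENNReal.ofReal_one, mul_one]

section Cop

variable (μ : Measure ℝ) (ψ : ℝ → ℝ)

noncomputable def Gf : ℝ → ℝ≥0∞ := fun y => ENNReal.ofReal (ψ y) / μ (Iic y)

noncomputable def Af : ℝ → ℝ≥0∞ := fun x => ∫⁻ y in Ici x, Gf μ ψ y ∂μ

variable {μ ψ}

lemma hF_meas : Measurable fun y => μ (Iic y) :=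
  Monotone.measurable fun _ _ hab => measure_mono (Iic_subset_Iic.2 hab)

lemma hG_meas (hψ : Measurable ψ) : Measurable (Gf μ ψ) :=
  (ENNReal.measurable_ofReal.comp hψ).div hF_meas

lemma hA_anti : Antitone (Af μ ψ) := fun _ _ hab =>
  lintegral_mono_set (Ici_subset_Ici.2 hab)

lemma hA_meas : Measurable (Af μ ψ) := hA_anti.measurable

lemma lemP (hψ : Measurable ψ) {p : ℝ} (hp0 : 0 < p) (hp1 : p < 1) (x : ℝ) :
    ENNReal.ofReal p * ∫⁻ y in Ici x, Gf μ ψ y * Af μ ψ y ^ (p - 1) ∂μ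
      ≤ Af μ ψ x ^ p := by
  set ν : Measure ℝ := (μ.restrict (Ici x)).withDensity (Gf μ ψ) with hν
  have hνIci : ∀ y ∈ Ici x, ν (Ici y) = Af μ ψ y := by
    intro y hy
    rw [hν, withDensity_apply _ measurableSet_Ici,
      Measure.restrict_restrict measurableSet_Ici,
      inter_eq_left.2 (Ici_subset_Ici.2 hy)]
    rfl
  have hνuniv : ν univ = Af μ ψ x := by
    rw [hν, withDensity_apply _ MeasurableSet.univ, Measure.restrict_univ]
    rfl
  have hTanti : Antitone fun y => ν (Ici y) := fun _ _ hab =>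
    measure_mono (Ici_subset_Ici.2 hab)
  have key : ∫⁻ y, ν (Ici y) ^ (p - 1) ∂ν
      = ∫⁻ y in Ici x, Gf μ ψ y * Af μ ψ y ^ (p - 1) ∂μ := by
    have h1 := lintegral_withDensity_eq_lintegral_mul (μ.restrict (Ici x))
      (hG_meas (μ := μ) hψ) (hTanti.measurable.pow_const (p - 1))
    refine h1.trans ?_
    refine setLIntegral_congr_fun measurableSet_Ici ?_
    refine fun y hy => ?_
    simp only [Pi.mul_apply]
    rw [hνIci y hy]
  calc ENNReal.ofReal p * ∫⁻ y in Ici x, Gf μ ψ y * Af μ ψ y ^ (p - 1) ∂μ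
      = ENNReal.ofReal p * ∫⁻ y, ν (Ici y) ^ (p - 1) ∂ν := by rw [key]
    _ ≤ ν univ ^ p := tail_lemma ν hp0 hp1
    _ = Af μ ψ x ^ p := by rw [hνuniv]

lemma aeF_ne_zero (μ : Measure ℝ) : ∀ᵐ y ∂μ, μ (Iic y) ≠ 0 := by
  rw [ae_iff]
  have hs : {y | ¬ μ (Iic y) ≠ 0} = {y | μ (Iic y) ≤ 0} := by ext y; simp [le_zero_iff]
  rw [hs]
  refine le_zero_iff.mp (lower_set_measure_le μ ?_ ?_)
  · intro a b ha hba
    exact le_trans (measure_mono (Iic_subset_Iic.2 hba)) ha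
  · exact fun y hy => hy

lemma lemA_s17 [IsProbabilityMeasure μ] (hψ : Measurable ψ) {p : ℝ}
    (hp0 : 0 < p) (hp1 : p < 1) :
    ENNReal.ofReal p * ∫⁻ y, ENNReal.ofReal (ψ y) * Af μ ψ y ^ (p - 1) ∂μ
      ≤ ∫⁻ x, Af μ ψ x ^ p ∂μ := by
  set H : ℝ → ℝ≥0∞ := fun y => Gf μ ψ y * Af μ ψ y ^ (p - 1) with hH
  have hHmeas : Measurable H := (hG_meas hψ).mul (hA_meas.pow_const _)
  have step1 : ∫⁻ y, ENNReal.ofReal (ψ y) * Af μ ψ y ^ (p - 1) ∂μ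
      = ∫⁻ y, H y * μ (Iic y) ∂μ := by
    refine lintegral_congr_ae ?_
    filter_upwards [aeF_ne_zero μ] with y hy
    rw [hH]
    simp only [Gf]
    rw [mul_right_comm, ENNReal.div_mul_cancel hy (measure_ne_top μ _)]
  have step2 : ∫⁻ y, H y * μ (Iic y) ∂μ = ∫⁻ x, ∫⁻ y in Ici x, H y ∂μ ∂μ := by
    have e1 : ∀ y, H y * μ (Iic y) = ∫⁻ x, (Iic y).indicator (fun _ => H y) x ∂μ := by
      intro y
      rw [lintegral_indicator measurableSet_Iic, setLIntegral_const, mul_comm]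
    have e2 : ∀ x, (∫⁻ y, (Iic y).indicator (fun _ => H y) x ∂μ) = ∫⁻ y in Ici x, H y ∂μ := by
      intro x
      rw [← lintegral_indicator measurableSet_Ici]
      refine lintegral_congr fun y => ?_
      by_cases h : x ≤ y
      · rw [Set.indicator_of_mem (by exact h : x ∈ Iic y), Set.indicator_of_mem (by exact h)]
      · rw [Set.indicator_of_notMem (by exact h : ¬ x ∈ Iic y),
          Set.indicator_of_notMem (by exact h)]
    simp_rw [e1]
    rw [lintegral_lintegral_swap ?_]
    · exact lintegral_congr e2
    · have huncurry : (Function.uncurry fun y x => (Iic y).indicator (fun _ => H y) x)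
          = ({q : ℝ × ℝ | q.2 ≤ q.1}.indicator fun q => H q.1) := by
        ext ⟨y, x⟩
        simp only [Function.uncurry, Set.indicator_apply, mem_Iic, mem_setOf_eq]
      rw [huncurry]
      exact ((hHmeas.comp measurable_fst).indicator
        (measurableSet_le measurable_snd measurable_fst)).aemeasurable
  rw [step1, step2]
  have hinner : Measurable fun x => ∫⁻ y in Ici x, H y ∂μ :=
    Antitone.measurable fun _ _ hab => lintegral_mono_set (Ici_subset_Ici.2 hab)
  rw [← lintegral_const_mul _ hinner]
  exact lintegral_mono fun x => lemP hψ hp0 hp1 x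

lemma lemB [IsProbabilityMeasure μ] (hψ : Measurable ψ) (hpos : ∀ y, 0 ≤ ψ y) {p : ℝ}
    (hp0 : 0 < p) (hp1 : p < 1) (hAtop : ∀ᵐ y ∂μ, Af μ ψ y ≠ ∞) :
    ∫⁻ y, ENNReal.ofReal (ψ y) ^ p ∂μ
      ≤ (∫⁻ y, ENNReal.ofReal (ψ y) * Af μ ψ y ^ (p - 1) ∂μ) ^ p
        * (∫⁻ y, Af μ ψ y ^ p ∂μ) ^ (1 - p) := by
  have hψset : MeasurableSet {y | 0 < ψ y} := measurableSet_lt measurable_const hψ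
  have null1 : ∀ᵐ y ∂μ, 0 < ψ y → Af μ ψ y ≠ 0 := by
    rw [ae_iff]
    have hset : {y | ¬ (0 < ψ y → Af μ ψ y ≠ 0)} = {y | Af μ ψ y = 0} ∩ {y | 0 < ψ y} := by
      ext y; simp only [mem_setOf_eq, mem_inter_iff]; tauto
    have hAset : MeasurableSet {y | Af μ ψ y = 0} := hA_meas (measurableSet_singleton 0)
    rw [hset, ← Measure.restrict_apply hAset]
    refine le_zero_iff.mp (upper_set_measure_le _ ?_ ?_)
    · intro a b ha hab
      simp only [mem_setOf_eq] at ha ⊢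
      exact le_zero_iff.mp (ha ▸ hA_anti hab)
    · intro y hy
      simp only [mem_setOf_eq] at hy
      rw [Measure.restrict_apply measurableSet_Ici]
      have h0 : ∫⁻ z in Ici y, Gf μ ψ z ∂μ = 0 := hy
      rw [lintegral_eq_zero_iff (hG_meas hψ)] at h0
      have hsub : (μ.restrict (Ici y)) {z | 0 < ψ z} = 0 := by
        have hne : {z | 0 < ψ z} ⊆ {z | ¬ Gf μ ψ z = 0} := by
          intro z hz
          simp only [mem_setOf_eq, Gf, ENNReal.div_eq_zero_iff, not_or]
          refine ⟨?_, measure_ne_top μ _⟩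
          simp only [ENNReal.ofReal_eq_zero, not_le]
          exact hz
        refine measure_mono_null hne ?_
        have := ae_iff.mp h0
        simpa using this
      rw [Measure.restrict_apply hψset] at hsub
      rw [le_zero_iff, inter_comm]
      exact hsub
  have hpq : Real.HolderConjugate (1/p) (1/(1-p)) := by
    rw [Real.holderConjugate_iff]; constructor
    · rw [lt_div_iff₀ hp0, one_mul]; exact hp1
    · simp only [one_div, inv_inv]; ring
  set f : ℝ → ℝ≥0∞ := fun y => (ENNReal.ofReal (ψ y) * Af μ ψ y ^ (p-1)) ^ p with hf
  set g : ℝ → ℝ≥0∞ := fun y => (Af μ ψ y ^ p) ^ (1-p) with hg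
  have hfm : Measurable f := ((ENNReal.measurable_ofReal.comp hψ).mul
    (hA_meas.pow_const _)).pow_const _
  have hgm : Measurable g := (hA_meas.pow_const _).pow_const _
  have hold := ENNReal.lintegral_mul_le_Lp_mul_Lq μ hpq hfm.aemeasurable hgm.aemeasurable
  have hfr : ∀ y, f y ^ (1/p) = ENNReal.ofReal (ψ y) * Af μ ψ y ^ (p-1) := by
    intro y
    rw [hf, ← ENNReal.rpow_mul, mul_one_div_cancel hp0.ne', ENNReal.rpow_one]
  have hgr : ∀ y, g y ^ (1/(1-p)) = Af μ ψ y ^ p := by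
    intro y
    rw [hg, ← ENNReal.rpow_mul, mul_one_div_cancel (by linarith : (1:ℝ) - p ≠ 0),
      ENNReal.rpow_one]
  simp_rw [hfr, hgr, one_div_one_div] at hold
  refine le_trans ?_ hold
  refine lintegral_mono_ae ?_
  filter_upwards [null1, hAtop] with y h1 h2
  rcases eq_or_lt_of_le (hpos y) with heq | hlt
  · simp only [Pi.mul_apply]
    rw [← heq, ENNReal.ofReal_zero, ENNReal.zero_rpow_of_pos hp0]
    positivity
  · have hA0 : Af μ ψ y ≠ 0 := h1 hlt
    simp only [Pi.mul_apply, hf, hg]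
    rw [ENNReal.mul_rpow_of_nonneg _ _ hp0.le, ← ENNReal.rpow_mul, ← ENNReal.rpow_mul,
      mul_assoc, ← ENNReal.rpow_add _ _ hA0 h2]
    have : (p-1) * p + p * (1-p) = 0 := by ring
    rw [this, ENNReal.rpow_zero, mul_one]

lemma mainlem (μ : Measure ℝ) [IsProbabilityMeasure μ] (hψ : Measurable ψ)
    (hpos : ∀ y, 0 ≤ ψ y) {p : ℝ} (hp0 : 0 < p) (hp1 : p < 1) :
    ENNReal.ofReal p ^ p * ∫⁻ y, ENNReal.ofReal (ψ y) ^ p ∂μ ≤ ∫⁻ x, Af μ ψ x ^ p ∂μ := by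
  set I := ∫⁻ x, Af μ ψ x ^ p ∂μ with hI
  rcases eq_or_ne I ∞ with hItop | hItop
  · rw [hItop]; exact le_top
  have hAtop : ∀ᵐ y ∂μ, Af μ ψ y ≠ ∞ := by
    have h1 : ∀ᵐ y ∂μ, Af μ ψ y ^ p < ∞ := ae_lt_top (hA_meas.pow_const _) hItop
    filter_upwards [h1] with y hy
    intro h
    rw [h, ENNReal.top_rpow_of_pos hp0] at hy
    exact lt_irrefl _ hy
  set K := ∫⁻ y, ENNReal.ofReal (ψ y) * Af μ ψ y ^ (p - 1) ∂μ with hK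
  set J := ∫⁻ y, ENNReal.ofReal (ψ y) ^ p ∂μ with hJ
  have hlA := lemA_s17 (μ := μ) hψ hp0 hp1
  have hlB := lemB (μ := μ) hψ hpos hp0 hp1 hAtop
  rcases eq_or_ne I 0 with hI0 | hI0
  · have hJ0 : J = 0 := by
      refine le_zero_iff.mp ?_
      calc J ≤ K ^ p * I ^ (1-p) := hlB
        _ = 0 := by rw [hI0, ENNReal.zero_rpow_of_pos (by linarith), mul_zero]
    rw [hJ0, mul_zero]
    positivity
  have hKle : K ≤ I / ENNReal.ofReal p := by
    rw [ENNReal.le_div_iff_mul_le (Or.inl (by simp [hp0] : ENNReal.ofReal p ≠ 0))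
      (Or.inl ENNReal.ofReal_ne_top), mul_comm]
    exact hlA
  calc ENNReal.ofReal p ^ p * J
      ≤ ENNReal.ofReal p ^ p * (K ^ p * I ^ (1-p)) := mul_le_mul_right hlB _
    _ ≤ ENNReal.ofReal p ^ p * ((I / ENNReal.ofReal p) ^ p * I ^ (1-p)) := by gcongr
    _ = (ENNReal.ofReal p * (I / ENNReal.ofReal p)) ^ p * I ^ (1-p) := by
        rw [ENNReal.mul_rpow_of_nonneg _ _ hp0.le, mul_assoc]
    _ = I ^ p * I ^ (1-p) := by
        rw [ENNReal.mul_div_cancel (by simp [hp0] : ENNReal.ofReal p ≠ 0)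
          ENNReal.ofReal_ne_top]
    _ = I := by
        rw [← ENNReal.rpow_add _ _ hI0 hItop]
        norm_num

end Cop


/-- Probability theoretic reversed Copson inequality for `0 < p < 1` (Theorem 4):
`{E((E(ψ(Y)/F(Y) 1_{Y≥X} | X))^p)}^{1/p} ≥ p {E(ψ(Y)^p)}^{1/p}`.
The conditional expectation is written explicitly, via independence, as
`∫_{[X,∞)} ψ(y)/F(y) dμ(y)` with `μ` the common law and `F(y) = μ(-∞,y]`. -/
theorem probability_copson_reversed {Ω : Type*} [MeasurableSpace Ω] (P : Measure Ω)
    [IsProbabilityMeasure P] (X Y : Ω → ℝ) (hX : Measurable X) (hY : Measurable Y)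
    (hindep : IndepFun X Y P) (hid : Measure.map X P = Measure.map Y P)
    (ψ : ℝ → ℝ) (hψ : Measurable ψ) (hpos : ∀ y, 0 ≤ ψ y)
    (p : ℝ) (hp0 : 0 < p) (hp1 : p < 1) :
    (∫⁻ ω, (∫⁻ y in Ici (X ω),
          ENNReal.ofReal (ψ y) / Measure.map Y P (Iic y) ∂(Measure.map Y P)) ^ p ∂P)
        ^ (1 / p)
      ≥ ENNReal.ofReal p * (∫⁻ ω, ENNReal.ofReal (ψ (Y ω)) ^ p ∂P) ^ (1 / p) := by
  set μ := Measure.map Y P with hμ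
  haveI : IsProbabilityMeasure μ := Measure.isProbabilityMeasure_map hY.aemeasurable
  have hLHS : ∫⁻ ω, (∫⁻ y in Ici (X ω), ENNReal.ofReal (ψ y) / μ (Iic y) ∂μ) ^ p ∂P
      = ∫⁻ x, Af μ ψ x ^ p ∂μ := by
    have h1 : ∫⁻ x, Af μ ψ x ^ p ∂μ = ∫⁻ x, Af μ ψ x ^ p ∂(Measure.map X P) := by
      rw [hμ, hid]
    rw [h1, lintegral_map ((hA_meas (μ := μ) (ψ := ψ)).pow_const _) hX]
    rfl
  have hRHS : ∫⁻ ω, ENNReal.ofReal (ψ (Y ω)) ^ p ∂P = ∫⁻ y, ENNReal.ofReal (ψ y) ^ p ∂μ := by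
    rw [hμ, lintegral_map (f := fun y => ENNReal.ofReal (ψ y) ^ p) (by fun_prop) hY]
  rw [ge_iff_le, hLHS, hRHS]
  calc ENNReal.ofReal p * (∫⁻ y, ENNReal.ofReal (ψ y) ^ p ∂μ) ^ (1/p)
      = (ENNReal.ofReal p ^ p * ∫⁻ y, ENNReal.ofReal (ψ y) ^ p ∂μ) ^ (1/p) := by
        rw [ENNReal.mul_rpow_of_nonneg _ _ (by positivity : (0:ℝ) ≤ 1/p), ← ENNReal.rpow_mul,
          mul_one_div_cancel hp0.ne', ENNReal.rpow_one]
    _ ≤ (∫⁻ x, Af μ ψ x ^ p ∂μ) ^ (1/p) :=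
        ENNReal.rpow_le_rpow (mainlem μ hψ hpos hp0 hp1) (by positivity)
end
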